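/- arXiv:1501.07458 — 4 statements merged into one kernel-verified Lean document; each statement's English description precedes it below -/
import Mathlib

section
/- For any heavy-tailed distribution F on the positive half-line with \bar{F}(x) > 0 for all x, liminf_{x→∞} \overline{F^{*2}}(x)/\bar{F}(x) ≥ 2. -/
open MeasureTheory Filter Set Asymptotics

open scoped ENNReal

/-- Tail function of a distribution: `F̄(x) = μ(x, ∞)`. -/
noncomputable def tail (μ : Measure ℝ) (x : ℝ) : ℝ := (μ (Set.Ioi x)).toReal

/-- `F(a, b] = F(b) - F(a)`. -/
noncomputable def intv (μ : Measure ℝ) (a b : ℝ) : ℝ := (μ (Set.Ioc a b)).toReal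

/-- A distribution is long-tailed if `F̄(x+1)/F̄(x) → 1` as `x → ∞`. -/
def LongTailed (μ : Measure ℝ) : Prop :=
  Tendsto (fun x => tail μ (x + 1) / tail μ x) atTop (nhds 1)

/-- Convolution of two distributions on ℝ (law of the sum of independent rvs). -/
noncomputable def mconv (μ ν : Measure ℝ) : Measure ℝ :=
  Measure.map (fun p : ℝ × ℝ => p.1 + p.2) (μ.prod ν)

/-- `n`-fold convolution of a distribution with itself; `nconv μ 0` is the unit mass at 0. -/
noncomputable def nconv (μ : Measure ℝ) : ℕ → Measure ℝ
  | 0 => Measure.dirac 0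
  | n + 1 => mconv (nconv μ n) μ

lemma lint_exp {β a t : ℝ} (hβ : 0 < β) (hat : a ≤ t) :
    ∫⁻ x in Set.Ioc a t, ENNReal.ofReal (β * Real.exp (β * x)) =
      ENNReal.ofReal (Real.exp (β * t) - Real.exp (β * a)) := by
  have hcont : Continuous fun x : ℝ => β * Real.exp (β * x) := by continuity
  have hint : IntegrableOn (fun x : ℝ => β * Real.exp (β * x)) (Set.Ioc a t) :=
    hcont.integrableOn_Ioc
  rw [← ofReal_integral_eq_lintegral_ofReal hint
      (Filter.Eventually.of_forall fun x => by positivity)]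
  congr 1
  have : ∫ x in Set.Ioc a t, β * Real.exp (β * x) = ∫ x in a..t, β * Real.exp (β * x) := by
    rw [intervalIntegral.integral_of_le hat]
  rw [this]
  have hderiv : ∀ x ∈ Set.uIcc a t, HasDerivAt (fun y => Real.exp (β * y))
      (β * Real.exp (β * x)) x := by
    intro x _
    have := (Real.hasDerivAt_exp (β * x)).comp x ((hasDerivAt_id x).const_mul β)
    simpa [mul_comm, Function.comp_def] using this
  rw [intervalIntegral.integral_eq_sub_of_hasDerivAt hderiv (hcont.intervalIntegrable a t)]

lemma layercake (F : Measure ℝ) [IsProbabilityMeasure F] (hsupp : F (Set.Iio 0) = 0)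
    {β : ℝ} (hβ : 0 < β) {s : Set ℝ} (hs : MeasurableSet s) :
    ∫⁻ y in s, ENNReal.ofReal (Real.exp (β * y)) ∂F =
      F s + ∫⁻ x in Set.Ioi 0, ENNReal.ofReal (β * Real.exp (β * x)) * F (s ∩ Set.Ioi x) := by
  have hae : ∀ᵐ y ∂(F.restrict s), (0:ℝ) ≤ y := by
    refine ae_restrict_of_ae ?_
    rw [ae_iff]
    convert hsupp using 2
    ext y; simp [Set.Iio]
  -- inner integral identity for y ≥ 0
  have hinner : ∀ y : ℝ, 0 ≤ y →
      ∫⁻ x in Set.Ioi 0, ENNReal.ofReal (β * Real.exp (β * x))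
        * (Set.Ioi x).indicator (1 : ℝ → ℝ≥0∞) y
      = ENNReal.ofReal (Real.exp (β * y) - 1) := by
    intro y hy
    have : ∀ x : ℝ, ENNReal.ofReal (β * Real.exp (β * x)) * (Set.Ioi x).indicator 1 y
        = (Set.Iio y).indicator (fun x => ENNReal.ofReal (β * Real.exp (β * x))) x := by
      intro x
      by_cases h : x < y <;>
        simp [Set.indicator_apply, h, not_lt.mpr, Set.mem_Ioi, Set.mem_Iio]
    rw [lintegral_congr this, lintegral_indicator measurableSet_Iio,
      Measure.restrict_restrict measurableSet_Iio]
    have h2 : Set.Iio y ∩ Set.Ioi 0 = Set.Ioo 0 y := by ext z; simp [and_comm]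
    rw [h2]
    have h3 : ∫⁻ x in Set.Ioo 0 y, ENNReal.ofReal (β * Real.exp (β * x))
        = ∫⁻ x in Set.Ioc 0 y, ENNReal.ofReal (β * Real.exp (β * x)) := by
      refine setLIntegral_congr (Ioo_ae_eq_Ioc)
    rw [h3, lint_exp hβ hy]
    norm_num
  calc ∫⁻ y in s, ENNReal.ofReal (Real.exp (β * y)) ∂F
      = ∫⁻ y in s, (1 + ∫⁻ x in Set.Ioi 0, ENNReal.ofReal (β * Real.exp (β * x))
          * (Set.Ioi x).indicator (1 : ℝ → ℝ≥0∞) y) ∂F := by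
        refine lintegral_congr_ae (hae.mono fun y hy => ?_)
        dsimp only
        rw [hinner y hy, ← ENNReal.ofReal_one, ← ENNReal.ofReal_add (by norm_num)
          (by nlinarith [Real.add_one_le_exp (β * y), hβ])]
        norm_num
    _ = F s + ∫⁻ y in s, (∫⁻ x in Set.Ioi 0, ENNReal.ofReal (β * Real.exp (β * x))
          * (Set.Ioi x).indicator (1 : ℝ → ℝ≥0∞) y) ∂F := by
        rw [lintegral_add_left measurable_const]
        simp
    _ = F s + ∫⁻ x in Set.Ioi 0, (∫⁻ y in s, ENNReal.ofReal (β * Real.exp (β * x))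
          * (Set.Ioi x).indicator (1 : ℝ → ℝ≥0∞) y ∂F) := by
        congr 1
        refine lintegral_lintegral_swap ?_
        apply Measurable.aemeasurable
        apply Measurable.mul
        · exact (ENNReal.measurable_ofReal.comp
            ((measurable_const.mul ((Real.measurable_exp).comp
              (measurable_const.mul measurable_snd))))).comp measurable_id
        · have hS : MeasurableSet {q : ℝ × ℝ | q.2 < q.1} :=
            measurableSet_lt measurable_snd measurable_fst
          have : (fun q : ℝ × ℝ => (Set.Ioi q.2).indicator (1 : ℝ → ℝ≥0∞) q.1)
              = {q : ℝ × ℝ | q.2 < q.1}.indicator 1 := by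
            ext q; by_cases h : q.2 < q.1 <;> simp [Set.indicator_apply, h]
          rw [this]
          exact measurable_const.indicator hS
    _ = F s + ∫⁻ x in Set.Ioi 0, ENNReal.ofReal (β * Real.exp (β * x)) * F (s ∩ Set.Ioi x) := by
        congr 1
        refine setLIntegral_congr_fun measurableSet_Ioi ?_
        intro x _
        dsimp only
        rw [lintegral_const_mul' _ _ ENNReal.ofReal_ne_top]
        congr 1
        rw [lintegral_indicator measurableSet_Ioi, Measure.restrict_restrict measurableSet_Ioi]
        simp [Set.inter_comm]

set_option maxHeartbeats 2000000 in
lemma freq (F : Measure ℝ) [IsProbabilityMeasure F] (hsupp : F (Set.Iio 0) = 0)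
    (hheavy : ∀ β : ℝ, 0 < β → ∫⁻ y, ENNReal.ofReal (Real.exp (β * y)) ∂F = ⊤) (M : ℝ) :
    ∃ x, M ≤ x ∧ tail (mconv F F) x ≤ 1000 * tail F x := by
  by_contra hcon
  push_neg at hcon
  set x₀ : ℝ := max M 1 with hx₀def
  have hx₀1 : (1:ℝ) ≤ x₀ := le_max_right _ _
  have hx₀pos : (0:ℝ) < x₀ := lt_of_lt_of_le one_pos hx₀1
  set β : ℝ := 1 / x₀ with hβdef
  have hβpos : 0 < β := by positivity
  have hβx₀ : β * x₀ = 1 := by rw [hβdef]; field_simp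
  set g : ℝ → ℝ≥0∞ := fun x => ENNReal.ofReal (β * Real.exp (β * x)) * F (Set.Ioi x) with hgdef
  have hFanti : Antitone fun x : ℝ => F (Set.Ioi x) :=
    fun a b hab => measure_mono (Ioi_subset_Ioi hab)
  have hFmeas : Measurable fun x : ℝ => F (Set.Ioi x) := hFanti.measurable
  have hemeas : Measurable fun x : ℝ => ENNReal.ofReal (β * Real.exp (β * x)) := by
    apply ENNReal.measurable_ofReal.comp
    exact (measurable_const.mul ((Real.measurable_exp).comp (measurable_const.mul measurable_id)))
  have hg : Measurable g := hemeas.mul hFmeas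
  set μ' : Measure ℝ := volume.withDensity g with hμ'def
  have hμ'Ioc : ∀ u v : ℝ, μ' (Ioc u v) = ∫⁻ x in Ioc u v, g x :=
    fun u v => withDensity_apply g measurableSet_Ioc
  have hgle : ∀ x, g x ≤ ENNReal.ofReal (β * Real.exp (β * x)) := fun x => by
    calc g x ≤ ENNReal.ofReal (β * Real.exp (β * x)) * 1 :=
          mul_le_mul_right prob_le_one _
      _ = _ := mul_one _
  have hslice_ub : ∀ u v : ℝ, u ≤ v →
      μ' (Ioc u v) ≤ ENNReal.ofReal (Real.exp (β * v) - Real.exp (β * u)) := by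
    intro u v huv
    rw [hμ'Ioc]
    calc ∫⁻ x in Ioc u v, g x ≤ ∫⁻ x in Ioc u v, ENNReal.ofReal (β * Real.exp (β * x)) :=
          setLIntegral_mono hemeas (fun x _ => hgle x)
      _ = _ := lint_exp hβpos huv
  -- divergence
  have hdiv0 : ∫⁻ x in Ioi 0, g x = ⊤ := by
    have h := layercake F hsupp hβpos MeasurableSet.univ
    rw [Measure.restrict_univ, hheavy β hβpos, measure_univ] at h
    simp only [Set.univ_inter] at h
    by_contra hne
    exact (ENNReal.add_ne_top.mpr ⟨ENNReal.one_ne_top, hne⟩) h.symm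
  have hdivx₀ : μ' (Ioi x₀) = ⊤ := by
    rw [hμ'def, withDensity_apply g measurableSet_Ioi]
    have hsplit : Ioc (0:ℝ) x₀ ∪ Ioi x₀ = Ioi 0 := Ioc_union_Ioi_eq_Ioi hx₀pos.le
    have := hdiv0
    rw [← hsplit, lintegral_union measurableSet_Ioi (Ioc_disjoint_Ioi le_rfl)] at this
    by_contra hne
    have h1 : ∫⁻ x in Ioc (0:ℝ) x₀, g x ≠ ⊤ := by
      refine ne_top_of_le_ne_top ?_ (setLIntegral_mono hemeas (fun x _ => hgle x))
      rw [lint_exp hβpos hx₀pos.le]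
      exact ENNReal.ofReal_ne_top
    exact (ENNReal.add_ne_top.mpr ⟨h1, hne⟩) this
  -- find t₁ with mass ≥ 1
  have htend : Tendsto (fun t => μ' (Ioc x₀ t)) atTop (nhds (μ' (Ioi x₀))) := by
    have h := tendsto_measure_iUnion_atTop (μ := μ') (s := fun t : ℝ => Ioc x₀ t)
      (fun a b hab => Ioc_subset_Ioc_right hab)
    rwa [iUnion_Ioc_right] at h
  have hev : ∀ᶠ t in atTop, 1 ≤ μ' (Ioc x₀ t) := by
    refine htend.eventually (eventually_ge_nhds ?_)
    rw [hdivx₀]; exact ENNReal.one_lt_top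
  obtain ⟨t₁, ht₁a, ht₁b⟩ := (hev.and (eventually_ge_atTop x₀)).exists
  set Sset : Set ℝ := {t : ℝ | x₀ ≤ t ∧ 1 ≤ μ' (Ioc x₀ t)} with hSdef
  have hSne : Sset.Nonempty := ⟨t₁, ht₁b, ht₁a⟩
  have hSbdd : BddBelow Sset := ⟨x₀, fun t ht => ht.1⟩
  set s := sInf Sset with hsdef
  have hx₀s : x₀ ≤ s := le_csInf hSne (fun t ht => ht.1)
  set δ : ℝ := min 1 (Real.exp (-(β * (s + 1))) / β) with hδdef
  have hδpos : 0 < δ := lt_min one_pos (by positivity)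
  have hδ1 : δ ≤ 1 := min_le_left _ _
  set T := s + δ with hTdef
  have hsT : s < T := by rw [hTdef]; linarith
  have hx₀T : x₀ ≤ T := le_trans hx₀s hsT.le
  have hTpos : (0:ℝ) < T := lt_of_lt_of_le hx₀pos hx₀T
  have hkey : β * Real.exp (β * T) * (2 * δ) ≤ 2 := by
    have h1 : δ ≤ Real.exp (-(β * (s + 1))) / β := min_le_right _ _
    have h2 : Real.exp (β * T) ≤ Real.exp (β * (s + 1)) :=
      Real.exp_le_exp.mpr (by nlinarith)
    have h3 : β * δ ≤ Real.exp (-(β * (s + 1))) := by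
      rw [le_div_iff₀ hβpos] at h1; linarith
    have h4 : Real.exp (-(β * (s + 1))) * Real.exp (β * (s + 1)) = 1 := by
      rw [← Real.exp_add]; simp
    calc β * Real.exp (β * T) * (2 * δ)
        = 2 * ((β * δ) * Real.exp (β * T)) := by ring
      _ ≤ 2 * (Real.exp (-(β * (s + 1))) * Real.exp (β * (s + 1))) := by
          have := Real.exp_pos (β * T)
          have h5 : (β * δ) * Real.exp (β * T) ≤ Real.exp (-(β * (s+1))) * Real.exp (β * (s+1)) := by
            have hbd : 0 ≤ β * δ := by positivity
            have := Real.exp_pos (-(β * (s + 1)))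
            nlinarith
          linarith
      _ = 2 := by rw [h4]; norm_num
  have hIT1 : 1 ≤ μ' (Ioc x₀ T) := by
    obtain ⟨t, htS, htlt⟩ := Real.lt_sInf_add_pos hSne hδpos
    exact le_trans htS.2 (measure_mono (Ioc_subset_Ioc_right (by rw [hTdef, hsdef]; exact htlt.le)))
  have hIT3 : μ' (Ioc x₀ T) ≤ 3 := by
    set u := max x₀ (s - δ) with hudef
    have hu1 : x₀ ≤ u := le_max_left _ _
    have huT : u ≤ T := max_le hx₀T (by linarith)
    have hu2δ : T - u ≤ 2 * δ := by
      have : s - δ ≤ u := le_max_right _ _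
      simp only [hTdef]; linarith
    have hIu : μ' (Ioc x₀ u) ≤ 1 := by
      rcases max_cases x₀ (s - δ) with ⟨h1, _⟩ | ⟨h1, _⟩
      · rw [hudef, h1, Set.Ioc_self, measure_empty]; exact zero_le_one
      · by_contra hgt
        have hus : u < s := by rw [hudef, h1]; linarith
        have : u ∈ Sset := ⟨hu1, (not_le.mp hgt).le⟩
        exact absurd (csInf_le hSbdd this) (not_le.mpr hus)
    have hsplit : μ' (Ioc x₀ T) = μ' (Ioc x₀ u) + μ' (Ioc u T) := by
      rw [← measure_union (Ioc_disjoint_Ioc_of_le le_rfl) measurableSet_Ioc,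
        Ioc_union_Ioc_eq_Ioc hu1 huT]
    have h2 : μ' (Ioc u T) ≤ 2 := by
      refine le_trans (hslice_ub u T huT) ?_
      have hmv : Real.exp (β * T) - Real.exp (β * u) ≤ β * Real.exp (β * T) * (T - u) := by
        have := Real.add_one_le_exp (β * u - β * T)
        have hE := Real.exp_pos (β * T)
        have : Real.exp (β * u) ≥ Real.exp (β * T) * (1 + (β * u - β * T)) := by
          calc Real.exp (β * u) = Real.exp (β * T) * Real.exp (β * u - β * T) := by
                rw [← Real.exp_add]; ring_nf
            _ ≥ Real.exp (β * T) * (1 + (β * u - β * T)) := by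
                have := Real.add_one_le_exp (β * u - β * T)
                nlinarith
        nlinarith
      have hle2 : Real.exp (β * T) - Real.exp (β * u) ≤ 2 := by
        have h5 : β * Real.exp (β * T) * (T - u) ≤ β * Real.exp (β * T) * (2 * δ) :=
          mul_le_mul_of_nonneg_left hu2δ (by positivity)
        linarith [hkey]
      calc ENNReal.ofReal (Real.exp (β * T) - Real.exp (β * u)) ≤ ENNReal.ofReal 2 :=
            ENNReal.ofReal_le_ofReal hle2
        _ = 2 := by norm_num
    calc μ' (Ioc x₀ T) = μ' (Ioc x₀ u) + μ' (Ioc u T) := hsplit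
      _ ≤ 1 + 2 := add_le_add hIu h2
      _ = 3 := by norm_num
  -- tail bound at T
  have hFT : F (Ioi T) = ENNReal.ofReal (tail F T) :=
    (ENNReal.ofReal_toReal (measure_ne_top F _)).symm
  have htail_nonneg : 0 ≤ tail F T := ENNReal.toReal_nonneg
  have htail_le1 : tail F T ≤ 1 := by
    have h := ENNReal.toReal_mono (by norm_num) (prob_le_one (μ := F) (s := Ioi T))
    exact h
  have htailT : Real.exp (β * T) * tail F T ≤ 12 := by
    set u' := max x₀ (T - x₀) with hu'def
    have hu'1 : x₀ ≤ u' := le_max_left _ _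
    have hu'T : u' ≤ T := max_le hx₀T (by linarith)
    have hsub : (0:ℝ) ≤ Real.exp (β * T) - Real.exp (β * u') := by
      have := Real.exp_le_exp.mpr (mul_le_mul_of_nonneg_left hu'T hβpos.le)
      linarith
    have hlow : ENNReal.ofReal ((Real.exp (β * T) - Real.exp (β * u')) * tail F T)
        ≤ μ' (Ioc x₀ T) := by
      rw [hμ'Ioc]
      have e1 : ENNReal.ofReal ((Real.exp (β * T) - Real.exp (β * u')) * tail F T)
          = ENNReal.ofReal (Real.exp (β * T) - Real.exp (β * u')) * F (Ioi T) := by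
        rw [ENNReal.ofReal_mul hsub, hFT]
      rw [e1, ← lint_exp hβpos hu'T, ← lintegral_mul_const' _ _ (measure_ne_top F _)]
      calc ∫⁻ x in Ioc u' T, ENNReal.ofReal (β * Real.exp (β * x)) * F (Ioi T)
          ≤ ∫⁻ x in Ioc u' T, g x :=
            setLIntegral_mono hg (fun x hx => mul_le_mul_right
              (measure_mono (Ioi_subset_Ioi hx.2)) _)
        _ ≤ ∫⁻ x in Ioc x₀ T, g x := lintegral_mono_set (Ioc_subset_Ioc_left hu'1)
    have h3' : (Real.exp (β * T) - Real.exp (β * u')) * tail F T ≤ 3 := by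
      have h := le_trans hlow hIT3
      have h32 : (3:ℝ≥0∞) = ENNReal.ofReal 3 := by norm_num
      rw [h32, ENNReal.ofReal_le_ofReal_iff (by norm_num)] at h
      exact h
    have hexpu' : Real.exp (β * u') ≤ 3 + Real.exp (β * T) / 2 := by
      have he3 : Real.exp (1:ℝ) ≤ 3 := Real.exp_one_lt_d9.le.trans (by norm_num)
      have hen : Real.exp (-(1:ℝ)) ≤ 1/2 := by
        have h2e : (2:ℝ) ≤ Real.exp 1 := by
          have := Real.add_one_le_exp (1:ℝ); linarith
        rw [Real.exp_neg, inv_le_comm₀ (Real.exp_pos 1) (by norm_num)]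
        norm_num
        linarith
      rcases max_choice x₀ (T - x₀) with hc | hc
      · rw [hu'def, hc, hβx₀]
        have := Real.exp_pos (β * T); linarith
      · rw [hu'def, hc]
        have harg : β * (T - x₀) = β * T + (-1) := by rw [mul_sub, hβx₀]; ring
        rw [harg, Real.exp_add]
        have hEp := Real.exp_pos (β * T)
        nlinarith
    nlinarith [mul_le_mul_of_nonneg_right hexpu' htail_nonneg, h3', htail_le1, htail_nonneg,
      Real.exp_pos (β * T)]
  -- piece over Ioc 0 x₀
  have hpiece0 : ∫⁻ x in Ioc (0:ℝ) x₀, g x ≤ 2 := by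
    refine le_trans (setLIntegral_mono hemeas fun x _ => hgle x) ?_
    rw [lint_exp hβpos hx₀pos.le]
    have : Real.exp (β * x₀) - Real.exp (β * 0) ≤ 2 := by
      rw [hβx₀]
      have he3 : Real.exp (1:ℝ) ≤ 3 := Real.exp_one_lt_d9.le.trans (by norm_num)
      simp [Real.exp_zero]; linarith
    calc ENNReal.ofReal (Real.exp (β * x₀) - Real.exp (β * 0)) ≤ ENNReal.ofReal 2 :=
          ENNReal.ofReal_le_ofReal this
      _ = 2 := by norm_num
  have hITle : ∫⁻ x in Ioc x₀ T, g x ≤ 3 := by rw [← hμ'Ioc]; exact hIT3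
  -- J bound
  have hJ : ∫⁻ y in Iic T, ENNReal.ofReal (Real.exp (β * y)) ∂F ≤ 6 := by
    rw [layercake F hsupp hβpos measurableSet_Iic]
    have hsecond : ∫⁻ x in Ioi (0:ℝ),
        ENNReal.ofReal (β * Real.exp (β * x)) * F (Iic T ∩ Ioi x) ≤ 5 := by
      rw [← Ioc_union_Ioi_eq_Ioi hTpos.le,
        lintegral_union measurableSet_Ioi (Ioc_disjoint_Ioi le_rfl)]
      have hz : ∫⁻ x in Ioi T, ENNReal.ofReal (β * Real.exp (β * x)) * F (Iic T ∩ Ioi x) = 0 := by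
        have : ∀ x ∈ Ioi T, ENNReal.ofReal (β * Real.exp (β * x)) * F (Iic T ∩ Ioi x)
            = (0:ℝ≥0∞) := by
          intro x hx
          have : Iic T ∩ Ioi x = ∅ := by
            ext y; simp only [mem_inter_iff, mem_Iic, mem_Ioi, mem_empty_iff_false, iff_false]
            rintro ⟨h1, h2⟩
            exact absurd (lt_of_le_of_lt h1 hx) (not_lt.mpr h2.le)
          rw [this, measure_empty, mul_zero]
        rw [setLIntegral_congr_fun measurableSet_Ioi this]
        simp
      have hfirst : ∫⁻ x in Ioc (0:ℝ) T,
          ENNReal.ofReal (β * Real.exp (β * x)) * F (Iic T ∩ Ioi x)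
          ≤ ∫⁻ x in Ioc (0:ℝ) T, g x :=
        setLIntegral_mono hg (fun x _ => mul_le_mul_right (measure_mono inter_subset_right) _)
      have hsplit2 : ∫⁻ x in Ioc (0:ℝ) T, g x ≤ 5 := by
        rw [← Ioc_union_Ioc_eq_Ioc hx₀pos.le hx₀T,
          lintegral_union measurableSet_Ioc (Ioc_disjoint_Ioc_of_le le_rfl)]
        calc _ ≤ 2 + 3 := add_le_add hpiece0 hITle
          _ = (5:ℝ≥0∞) := by norm_num
      rw [hz, add_zero]
      exact le_trans hfirst hsplit2
    calc F (Iic T) + _ ≤ 1 + 5 := add_le_add prob_le_one hsecond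
      _ = 6 := by norm_num
  -- K bound
  set K := ∫⁻ y, ENNReal.ofReal (Real.exp (β * min y T)) ∂F with hKdef
  have hK : K ≤ 18 := by
    rw [hKdef, ← lintegral_add_compl (fun y => ENNReal.ofReal (Real.exp (β * min y T)))
      (measurableSet_Iic (a := T)) (μ := F)]
    have hIicpart : ∫⁻ y in Iic T, ENNReal.ofReal (Real.exp (β * min y T)) ∂F ≤ 6 := by
      refine le_trans (le_of_eq (setLIntegral_congr_fun measurableSet_Iic
        (fun y hy => by rw [min_eq_left hy]))) hJ
    have hIoipart : ∫⁻ y in (Iic T)ᶜ, ENNReal.ofReal (Real.exp (β * min y T)) ∂F ≤ 12 := by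
      rw [compl_Iic]
      have heq : ∫⁻ y in Ioi T, ENNReal.ofReal (Real.exp (β * min y T)) ∂F
          = ENNReal.ofReal (Real.exp (β * T)) * F (Ioi T) := by
        rw [setLIntegral_congr_fun measurableSet_Ioi
          (fun y hy => by rw [min_eq_right (le_of_lt hy)])]
        rw [setLIntegral_const, mul_comm]
      rw [heq, hFT, ← ENNReal.ofReal_mul (Real.exp_pos _).le]
      calc ENNReal.ofReal (Real.exp (β * T) * tail F T) ≤ ENNReal.ofReal 12 :=
            ENNReal.ofReal_le_ofReal htailT
        _ = 12 := by norm_num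
    calc _ ≤ (6:ℝ≥0∞) + 12 := add_le_add hIicpart hIoipart
      _ = 18 := by norm_num
  -- product measure facts
  have hSmeas : ∀ x : ℝ, MeasurableSet {p : ℝ × ℝ | x < p.1 + p.2} := fun x =>
    measurableSet_lt measurable_const (measurable_fst.add measurable_snd)
  have haeprod : ∀ᵐ p : ℝ × ℝ ∂(F.prod F), 0 ≤ p.1 ∧ 0 ≤ p.2 := by
    rw [ae_iff]
    have hsub : {p : ℝ × ℝ | ¬(0 ≤ p.1 ∧ 0 ≤ p.2)} ⊆ (Iio 0 ×ˢ univ) ∪ (univ ×ˢ Iio 0) := by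
      intro p hp
      simp only [mem_setOf_eq, not_and_or, not_le] at hp
      rcases hp with h | h
      · exact Or.inl ⟨h, mem_univ _⟩
      · exact Or.inr ⟨mem_univ _, h⟩
    refine measure_mono_null hsub (measure_union_null ?_ ?_) <;>
      rw [Measure.prod_prod] <;> simp [hsupp]
  set q : ℝ → ℝ≥0∞ := fun y => ENNReal.ofReal (Real.exp (β * min y T)) with hqdef
  have hqmeas : Measurable q := by
    apply ENNReal.measurable_ofReal.comp
    exact Real.measurable_exp.comp (measurable_const.mul (measurable_id.min measurable_const))
  have h0T : (0:ℝ) ≤ T := hTpos.le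
  have hmain_ub : ∫⁻ x in Ioc x₀ T, ENNReal.ofReal (β * Real.exp (β * x))
      * (F.prod F) {p : ℝ × ℝ | x < p.1 + p.2} ≤ K * K := by
    have hjoint : Measurable (Function.uncurry fun (x : ℝ) (p : ℝ × ℝ) =>
        ENNReal.ofReal (β * Real.exp (β * x))
          * ({p' : ℝ × ℝ | x < p'.1 + p'.2}.indicator (1 : (ℝ × ℝ) → ℝ≥0∞) p)) := by
      have h1 : Measurable fun w : ℝ × (ℝ × ℝ) => ENNReal.ofReal (β * Real.exp (β * w.1)) :=
        hemeas.comp measurable_fst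
      have hset : MeasurableSet {w : ℝ × (ℝ × ℝ) | w.1 < w.2.1 + w.2.2} :=
        measurableSet_lt measurable_fst
          ((measurable_fst.comp measurable_snd).add (measurable_snd.comp measurable_snd))
      have h2 : Measurable ({w : ℝ × (ℝ × ℝ) | w.1 < w.2.1 + w.2.2}.indicator
          (1 : (ℝ × (ℝ × ℝ)) → ℝ≥0∞)) := measurable_const.indicator hset
      have heq : (Function.uncurry fun (x : ℝ) (p : ℝ × ℝ) =>
          ENNReal.ofReal (β * Real.exp (β * x))
            * ({p' : ℝ × ℝ | x < p'.1 + p'.2}.indicator (1 : (ℝ × ℝ) → ℝ≥0∞) p))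
          = fun w : ℝ × (ℝ × ℝ) => ENNReal.ofReal (β * Real.exp (β * w.1))
            * ({w' : ℝ × (ℝ × ℝ) | w'.1 < w'.2.1 + w'.2.2}.indicator
              (1 : (ℝ × (ℝ × ℝ)) → ℝ≥0∞) w) := by
        ext ⟨x, p⟩
        by_cases h : x < p.1 + p.2 <;>
          simp [Function.uncurry, Set.indicator_apply, h]
      rw [heq]
      exact h1.mul h2
    calc ∫⁻ x in Ioc x₀ T, ENNReal.ofReal (β * Real.exp (β * x))
          * (F.prod F) {p : ℝ × ℝ | x < p.1 + p.2}
        = ∫⁻ x in Ioc x₀ T, ∫⁻ p, ENNReal.ofReal (β * Real.exp (β * x))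
            * ({p' : ℝ × ℝ | x < p'.1 + p'.2}.indicator (1 : (ℝ × ℝ) → ℝ≥0∞) p)
            ∂(F.prod F) := by
          refine setLIntegral_congr_fun measurableSet_Ioc
            (fun x _ => ?_)
          rw [lintegral_const_mul' _ _ ENNReal.ofReal_ne_top, lintegral_indicator_one (hSmeas x)]
      _ = ∫⁻ p, (∫⁻ x in Ioc x₀ T, ENNReal.ofReal (β * Real.exp (β * x))
            * ({p' : ℝ × ℝ | x < p'.1 + p'.2}.indicator (1 : (ℝ × ℝ) → ℝ≥0∞) p))
            ∂(F.prod F) := lintegral_lintegral_swap hjoint.aemeasurable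
      _ ≤ ∫⁻ p, q p.1 * q p.2 ∂(F.prod F) := by
          refine lintegral_mono_ae (haeprod.mono fun p hp => ?_)
          have hrw : ∀ x : ℝ, ENNReal.ofReal (β * Real.exp (β * x))
              * ({p' : ℝ × ℝ | x < p'.1 + p'.2}.indicator (1 : (ℝ × ℝ) → ℝ≥0∞) p)
              = (Iio (p.1 + p.2)).indicator
                (fun x => ENNReal.ofReal (β * Real.exp (β * x))) x := by
            intro x
            by_cases h : x < p.1 + p.2 <;> simp [Set.indicator_apply, h]
          rw [lintegral_congr hrw, lintegral_indicator measurableSet_Iio,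
            Measure.restrict_restrict measurableSet_Iio]
          have hqq : ENNReal.ofReal (Real.exp (β * min (p.1 + p.2) T)) ≤ q p.1 * q p.2 := by
            have hminadd : min (p.1 + p.2) T ≤ min p.1 T + min p.2 T := by
              rcases le_total p.1 T with h1 | h1
              · rcases le_total p.2 T with h2 | h2
                · rw [min_eq_left h1, min_eq_left h2]; exact min_le_left _ _
                · rw [min_eq_right h2]
                  have : 0 ≤ min p.1 T := le_min hp.1 h0T
                  linarith [min_le_right (p.1 + p.2) T]
              · rw [min_eq_right h1]
                have : 0 ≤ min p.2 T := le_min hp.2 h0T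
                linarith [min_le_right (p.1 + p.2) T]
            rw [hqdef]
            calc ENNReal.ofReal (Real.exp (β * min (p.1 + p.2) T))
                ≤ ENNReal.ofReal (Real.exp (β * (min p.1 T + min p.2 T))) := by
                  exact ENNReal.ofReal_le_ofReal (Real.exp_le_exp.mpr
                    (mul_le_mul_of_nonneg_left hminadd hβpos.le))
              _ = ENNReal.ofReal (Real.exp (β * min p.1 T) * Real.exp (β * min p.2 T)) := by
                  rw [← Real.exp_add, mul_add]
              _ = _ := ENNReal.ofReal_mul (Real.exp_pos _).le
          rcases le_or_gt (p.1 + p.2) x₀ with hcase | hcase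
          · have hempty : Iio (p.1 + p.2) ∩ Ioc x₀ T = ∅ := by
              ext z
              simp only [mem_inter_iff, mem_Iio, mem_Ioc, mem_empty_iff_false, iff_false]
              rintro ⟨h1, h2, _⟩
              exact absurd (lt_of_le_of_lt hcase h2) (not_lt.mpr h1.le)
            rw [hempty]
            simp only [Measure.restrict_empty, lintegral_zero_measure]
            exact zero_le
          · have hsub2 : Iio (p.1 + p.2) ∩ Ioc x₀ T ⊆ Ioc x₀ (min (p.1 + p.2) T) :=
              fun z hz => ⟨hz.2.1, le_min hz.1.le hz.2.2⟩
            calc ∫⁻ x in Iio (p.1 + p.2) ∩ Ioc x₀ T, ENNReal.ofReal (β * Real.exp (β * x))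
                ≤ ∫⁻ x in Ioc x₀ (min (p.1 + p.2) T), ENNReal.ofReal (β * Real.exp (β * x)) :=
                  lintegral_mono_set hsub2
              _ = ENNReal.ofReal (Real.exp (β * min (p.1 + p.2) T) - Real.exp (β * x₀)) :=
                  lint_exp hβpos (le_min hcase.le hx₀T)
              _ ≤ ENNReal.ofReal (Real.exp (β * min (p.1 + p.2) T)) :=
                  ENNReal.ofReal_le_ofReal (by linarith [Real.exp_pos (β * x₀)])
              _ ≤ q p.1 * q p.2 := hqq
      _ = K * K := by
          rw [lintegral_prod_mul hqmeas.aemeasurable hqmeas.aemeasurable]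
  -- lower bound
  have hlb_pt : ∀ x ∈ Ioc x₀ T, (1000:ℝ≥0∞) * F (Ioi x)
      ≤ (F.prod F) {p : ℝ × ℝ | x < p.1 + p.2} := by
    intro x hx
    have hMx : M ≤ x := le_trans (le_max_left M 1) hx.1.le
    have hlt := hcon x hMx
    have hFx : F (Ioi x) = ENNReal.ofReal (tail F x) :=
      (ENNReal.ofReal_toReal (measure_ne_top F _)).symm
    have h1 : (1000:ℝ≥0∞) * F (Ioi x) = ENNReal.ofReal (1000 * tail F x) := by
      rw [ENNReal.ofReal_mul (by norm_num), hFx]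
      norm_num
    have h2 : ENNReal.ofReal (tail (mconv F F) x) = (F.prod F) {p : ℝ × ℝ | x < p.1 + p.2} := by
      have hmap : (mconv F F) (Ioi x) = (F.prod F) {p : ℝ × ℝ | x < p.1 + p.2} := by
        rw [mconv, Measure.map_apply (f := fun p : ℝ × ℝ => p.1 + p.2) (by fun_prop) measurableSet_Ioi]
        rfl
      rw [tail, hmap, ENNReal.ofReal_toReal (measure_ne_top _ _)]
    rw [h1, ← h2]
    exact ENNReal.ofReal_le_ofReal hlt.le
  have hProdAnti : Antitone fun x : ℝ => (F.prod F) {p : ℝ × ℝ | x < p.1 + p.2} := by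
    intro a b hab
    exact measure_mono (fun p hp => lt_of_le_of_lt hab hp)
  have hmain_lb : (1000:ℝ≥0∞) ≤ ∫⁻ x in Ioc x₀ T, ENNReal.ofReal (β * Real.exp (β * x))
      * (F.prod F) {p : ℝ × ℝ | x < p.1 + p.2} := by
    have hmono : ∫⁻ x in Ioc x₀ T, (1000:ℝ≥0∞) * g x
        ≤ ∫⁻ x in Ioc x₀ T, ENNReal.ofReal (β * Real.exp (β * x))
          * (F.prod F) {p : ℝ × ℝ | x < p.1 + p.2} := by
      refine setLIntegral_mono (hemeas.mul hProdAnti.measurable) fun x hx => ?_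
      calc (1000:ℝ≥0∞) * g x
          = ENNReal.ofReal (β * Real.exp (β * x)) * (1000 * F (Ioi x)) := by
            rw [hgdef]; ring
        _ ≤ _ := mul_le_mul_right (hlb_pt x hx) _
    calc (1000:ℝ≥0∞) = 1000 * 1 := by norm_num
      _ ≤ 1000 * μ' (Ioc x₀ T) := mul_le_mul_right hIT1 _
      _ = ∫⁻ x in Ioc x₀ T, 1000 * g x := by
          rw [hμ'Ioc, lintegral_const_mul' _ _ (by norm_num)]
      _ ≤ _ := hmono
  have hcontra : (1000:ℝ≥0∞) ≤ 18 * 18 :=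
    le_trans hmain_lb (le_trans hmain_ub (mul_le_mul' hK hK))
  norm_num at hcontra

lemma tail_conv_ge (F : Measure ℝ) [IsProbabilityMeasure F] (hsupp : F (Set.Iio 0) = 0)
    {x : ℝ} (hx : 0 ≤ x) :
    2 * tail F x - tail F x ^ 2 ≤ tail (mconv F F) x := by
  set P := F.prod F with hPdef
  have hFIci : F (Ici 0) = 1 := by
    have := measure_compl (measurableSet_Iio (a := (0:ℝ))) (measure_ne_top F _)
    rw [hsupp, compl_Iio] at this
    simpa [measure_univ] using this
  set A : Set (ℝ × ℝ) := Ioi x ×ˢ Ici 0 with hAdef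
  set B : Set (ℝ × ℝ) := Ici 0 ×ˢ Ioi x with hBdef
  have hBmeas : MeasurableSet B := measurableSet_Ici.prod measurableSet_Ioi
  have hPA : P A = F (Ioi x) := by rw [hAdef, Measure.prod_prod, hFIci, mul_one]
  have hPB : P B = F (Ioi x) := by rw [hBdef, Measure.prod_prod, hFIci, one_mul]
  have hAB : A ∩ B = Ioi x ×ˢ Ioi x := by
    rw [hAdef, hBdef, Set.prod_inter_prod]
    congr 1
    · exact Set.inter_eq_left.mpr (fun z hz => le_trans hx hz.le)
    · exact Set.inter_eq_right.mpr (fun z hz => le_trans hx hz.le)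
  have hPAB : P (A ∩ B) = F (Ioi x) * F (Ioi x) := by rw [hAB, Measure.prod_prod]
  have hkey : P (A ∪ B) + F (Ioi x) * F (Ioi x) = F (Ioi x) + F (Ioi x) := by
    rw [← hPAB, measure_union_add_inter A hBmeas, hPA, hPB]
  -- A ∪ B ⊆ preimage
  have hsub : A ∪ B ⊆ {p : ℝ × ℝ | x < p.1 + p.2} := by
    rintro p (hp | hp)
    · exact lt_of_lt_of_le hp.1 (le_add_of_nonneg_right (show (0:ℝ) ≤ p.2 from hp.2))
    · exact lt_of_lt_of_le hp.2 (le_add_of_nonneg_left (show (0:ℝ) ≤ p.1 from hp.1))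
  have hmap : (mconv F F) (Ioi x) = P {p : ℝ × ℝ | x < p.1 + p.2} := by
    rw [mconv, Measure.map_apply (f := fun p : ℝ × ℝ => p.1 + p.2) (by fun_prop) measurableSet_Ioi]
    rfl
  -- to reals
  set t := tail F x with htdef
  have hFx : (F (Ioi x)).toReal = t := rfl
  have hfin : ∀ s : Set (ℝ × ℝ), P s ≠ ⊤ := fun s => measure_ne_top _ _
  have hUnion : (P (A ∪ B)).toReal = 2 * t - t ^ 2 := by
    have h2 : (P (A ∪ B)).toReal + t * t = t + t := by
      have := congrArg ENNReal.toReal hkey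
      rwa [ENNReal.toReal_add (hfin _) (ENNReal.mul_ne_top (measure_ne_top F _)
        (measure_ne_top F _)), ENNReal.toReal_mul, ENNReal.toReal_add (measure_ne_top F _)
        (measure_ne_top F _), hFx] at this
    nlinarith [h2]
  calc 2 * t - t ^ 2 = (P (A ∪ B)).toReal := hUnion.symm
    _ ≤ (P {p : ℝ × ℝ | x < p.1 + p.2}).toReal := by
        exact ENNReal.toReal_mono (hfin _) (measure_mono hsub)
    _ = tail (mconv F F) x := by rw [tail, hmap]

/-- For any heavy-tailed distribution on the positive half-line with everywhere positive
tail, liminf of tail(F*F)(x)/tail(F)(x) is at least 2. -/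
theorem stmt13 (F : Measure ℝ) [IsProbabilityMeasure F] (hsupp : F (Set.Iio 0) = 0)
    (hpos : ∀ x, 0 < tail F x)
    (hheavy : ∀ β : ℝ, 0 < β → ∫⁻ y, ENNReal.ofReal (Real.exp (β * y)) ∂F = ⊤) :
    2 ≤ atTop.liminf (fun x => tail (mconv F F) x / tail F x) := by
  have htail0 : Tendsto (tail F) atTop (nhds 0) := by
    have h1 : Tendsto (fun x => F (Iic x)) atTop (nhds (F univ)) := tendsto_measure_Iic_atTop F
    have h2 : Tendsto (fun x => (F (Iic x)).toReal) atTop (nhds 1) := by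
      have h3 := (ENNReal.tendsto_toReal (measure_ne_top F univ)).comp h1
      simpa [measure_univ, Function.comp_def] using h3
    have heq : ∀ x, tail F x = 1 - (F (Iic x)).toReal := by
      intro x
      have hc : F (Ioi x) = F univ - F (Iic x) := by
        rw [← compl_Iic, measure_compl measurableSet_Iic (measure_ne_top F _)]
      rw [tail, hc, measure_univ,
        ENNReal.toReal_sub_of_le prob_le_one ENNReal.one_ne_top]
      norm_num
    have h4 : Tendsto (fun x => 1 - (F (Iic x)).toReal) atTop (nhds 0) := by
      have := (tendsto_const_nhds (α := ℝ) (x := (1:ℝ)) (f := atTop)).sub h2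
      simpa using this
    exact Tendsto.congr (fun x => (heq x).symm) h4
  have hratio_ge : ∀ᶠ x in atTop, 2 - tail F x ≤ tail (mconv F F) x / tail F x := by
    filter_upwards [eventually_ge_atTop (0:ℝ)] with x hx
    have h := tail_conv_ge F hsupp hx
    have ht := hpos x
    rw [le_div_iff₀ ht]
    nlinarith
  have hV : Tendsto (fun x => 2 - tail F x) atTop (nhds 2) := by
    have := (tendsto_const_nhds (α := ℝ) (x := (2:ℝ)) (f := atTop)).sub htail0
    simpa using this
  have hbound : IsBoundedUnder (· ≥ ·) atTop (fun x => 2 - tail F x) :=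
    hV.isBoundedUnder_ge
  have hfreq : ∃ᶠ x in atTop, tail (mconv F F) x / tail F x ≤ 1000 := by
    rw [frequently_atTop]
    intro a
    obtain ⟨x, hx1, hx2⟩ := freq F hsupp hheavy a
    refine ⟨x, hx1, ?_⟩
    rw [div_le_iff₀ (hpos x)]
    linarith
  have hcob : IsCoboundedUnder (· ≥ ·) atTop (fun x => tail (mconv F F) x / tail F x) := by
    refine ⟨1000, fun a ha => ?_⟩
    rw [eventually_map] at ha
    obtain ⟨x, hx1, hx2⟩ := (hfreq.and_eventually ha).exists
    exact le_trans hx2 hx1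
  calc (2:ℝ) = atTop.liminf (fun x => 2 - tail F x) := hV.liminf_eq.symm
    _ ≤ atTop.liminf (fun x => tail (mconv F F) x / tail F x) :=
        liminf_le_liminf hratio_ge hbound hcob
end

section
/- Let F be a distribution and n ≥ 1 with F^{*n} ∈ L ∩ OS. Suppose for some ε₀ > 0 the counting random variable τ with P(τ = k) = pₖ satisfies ∑_{m=1}^∞ (∑_{k=(m-1)n+1}^{mn} pₖ)(C*(F^{*n}) - 1 + ε₀)^m < ∞, where C*(G) = limsup_{x→∞} \overline{G^{*2}}(x)/\bar{G}(x). Then for every 0 < ε < 1 there exists M ≥ 2 such that ∑_{k=M}^∞ pₖ \overline{F^{*k}}(x) ≤ ε \overline{F^{*τ}}(x) for all x ≥ 0. -/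
open MeasureTheory Filter Set Asymptotics

/-- The class OS of generalised subexponential distributions. -/
def OSClass (μ : Measure ℝ) : Prop :=
  (∀ x, 0 < tail μ x) ∧ ∃ M : ℝ, ∀ᶠ x in atTop, tail (mconv μ μ) x ≤ M * tail μ x

/-- C*(G) = limsup tail(G*G)(x)/tail(G)(x). -/
noncomputable def Cstar (μ : Measure ℝ) : ℝ :=
  atTop.limsup (fun x => tail (mconv μ μ) x / tail μ x)

open scoped ENNReal

lemma measurable_add2 : Measurable fun p : ℝ × ℝ => p.1 + p.2 :=
  measurable_fst.add measurable_snd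

instance mconv.instProb (μ ν : Measure ℝ) [IsProbabilityMeasure μ] [IsProbabilityMeasure ν] :
    IsProbabilityMeasure (mconv μ ν) :=
  Measure.isProbabilityMeasure_map measurable_add2.aemeasurable

instance nconv.instProb (μ : Measure ℝ) [IsProbabilityMeasure μ] (k : ℕ) :
    IsProbabilityMeasure (nconv μ k) := by
  induction k with
  | zero => exact Measure.dirac.isProbabilityMeasure
  | succ k ih => exact mconv.instProb _ _

lemma mconv_dirac' (ν : Measure ℝ) [SFinite ν] : mconv ν (Measure.dirac 0) = ν := by
  unfold mconv
  rw [Measure.prod_dirac, Measure.map_map measurable_add2 (by fun_prop)]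
  simp [Function.comp_def]

lemma mconv_assoc (μ ν ρ : Measure ℝ) [SFinite μ] [SFinite ν] [SFinite ρ] :
    mconv (mconv μ ν) ρ = mconv μ (mconv ν ρ) := by
  have hl : mconv (mconv μ ν) ρ =
      Measure.map (fun p : (ℝ × ℝ) × ℝ => p.1.1 + p.1.2 + p.2) ((μ.prod ν).prod ρ) := by
    unfold mconv
    nth_rewrite 1 [show ρ = Measure.map id ρ from (Measure.map_id).symm]
    rw [Measure.map_prod_map _ _ measurable_add2 measurable_id,
      Measure.map_map measurable_add2 (measurable_add2.prodMap measurable_id)]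
    rfl
  have hr : mconv μ (mconv ν ρ) =
      Measure.map (fun p : ℝ × ℝ × ℝ => p.1 + (p.2.1 + p.2.2)) (μ.prod ((ν.prod ρ))) := by
    unfold mconv
    rw [show μ.prod (Measure.map (fun p : ℝ × ℝ => p.1 + p.2) (ν.prod ρ)) =
        Measure.map (Prod.map id (fun p : ℝ × ℝ => p.1 + p.2)) (μ.prod (ν.prod ρ)) from by
      rw [← Measure.map_prod_map _ _ measurable_id measurable_add2, Measure.map_id],
      Measure.map_map measurable_add2 (measurable_id.prodMap measurable_add2)]
    rfl
  rw [hl, hr, ← Measure.prodAssoc_prod,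
    Measure.map_map (by exact measurable_fst.add (measurable_fst.comp measurable_snd |>.add
      (measurable_snd.comp measurable_snd))) (MeasurableEquiv.prodAssoc).measurable]
  congr 1
  ext p
  simp [MeasurableEquiv.prodAssoc, Function.comp, add_assoc]

lemma nconv_add (μ : Measure ℝ) [IsProbabilityMeasure μ] (a b : ℕ) :
    nconv μ (a + b) = mconv (nconv μ a) (nconv μ b) := by
  induction b with
  | zero => simp only [Nat.add_zero]; rw [show nconv μ 0 = Measure.dirac 0 from rfl, mconv_dirac']
  | succ b ih =>
      rw [show a + (b+1) = (a+b) + 1 from by ring,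
        show nconv μ ((a+b)+1) = mconv (nconv μ (a+b)) μ from rfl, ih, mconv_assoc]
      rfl

lemma tail_nonneg (μ : Measure ℝ) (x : ℝ) : 0 ≤ tail μ x := ENNReal.toReal_nonneg

lemma tail_le_one (μ : Measure ℝ) [IsProbabilityMeasure μ] (x : ℝ) : tail μ x ≤ 1 := by
  have := prob_le_one (μ := μ) (s := Set.Ioi x)
  unfold tail
  exact ENNReal.toReal_le_of_le_ofReal zero_le_one (by simpa using this)

lemma tail_mono (μ : Measure ℝ) [IsFiniteMeasure μ] {x y : ℝ} (h : x ≤ y) :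
    tail μ y ≤ tail μ x := by
  unfold tail
  exact ENNReal.toReal_mono (measure_ne_top _ _) (measure_mono (Set.Ioi_subset_Ioi h))

lemma tail_mconv_ge (μ ν : Measure ℝ) [IsProbabilityMeasure μ] [IsProbabilityMeasure ν]
    (x a : ℝ) : tail μ (x + a) * tail ν (-a) ≤ tail (mconv μ ν) x := by
  have hmap : mconv μ ν (Set.Ioi x) = (μ.prod ν) ((fun p : ℝ × ℝ => p.1 + p.2) ⁻¹' Set.Ioi x) :=
    Measure.map_apply measurable_add2 measurableSet_Ioi
  have hsub : Set.Ioi (x + a) ×ˢ Set.Ioi (-a) ⊆ (fun p : ℝ × ℝ => p.1 + p.2) ⁻¹' Set.Ioi x := by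
    rintro ⟨p1, p2⟩ ⟨h1, h2⟩
    simp only [Set.mem_Ioi, Set.mem_preimage] at *
    linarith
  have : μ (Set.Ioi (x + a)) * ν (Set.Ioi (-a)) ≤ mconv μ ν (Set.Ioi x) := by
    rw [hmap, ← Measure.prod_prod]
    exact measure_mono hsub
  unfold tail
  rw [← ENNReal.toReal_mul]
  exact ENNReal.toReal_mono (measure_ne_top _ _) this

lemma exists_tail_ge_half (ν : Measure ℝ) [IsProbabilityMeasure ν] :
    ∃ b : ℝ, 0 ≤ b ∧ (1:ℝ)/2 ≤ tail ν (-b) := by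
  have hmono : Monotone fun m : ℕ => Set.Ioi (-(m:ℝ)) := by
    intro i j hij
    exact Set.Ioi_subset_Ioi (by exact_mod_cast neg_le_neg (by exact_mod_cast hij))
  have hUnion : (⋃ m : ℕ, Set.Ioi (-(m:ℝ))) = Set.univ := by
    ext x
    simp only [Set.mem_iUnion, Set.mem_Ioi, Set.mem_univ, iff_true]
    obtain ⟨m, hm⟩ := exists_nat_gt (-x)
    exact ⟨m, by linarith⟩
  have htend := tendsto_measure_iUnion_atTop (μ := ν) hmono
  rw [hUnion, measure_univ] at htend
  have : ∀ᶠ m : ℕ in atTop, (1:ℝ≥0∞)/2 < ν (Set.Ioi (-(m:ℝ))) :=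
    htend.eventually_const_lt (by norm_num)
  obtain ⟨m, hm⟩ := this.exists
  refine ⟨m, Nat.cast_nonneg m, ?_⟩
  unfold tail
  have := ENNReal.toReal_mono (measure_ne_top _ _) hm.le
  simpa using this

lemma longtail_shift {G : Measure ℝ} [IsProbabilityMeasure G]
    (hL : Tendsto (fun x => tail G (x + 1) / tail G x) atTop (nhds 1))
    (hpos : ∀ x, 0 < tail G x) (b : ℝ) (hb : 0 ≤ b) :
    ∃ c > 0, ∀ x, 0 ≤ x → c * tail G x ≤ tail G (x + b) := by
  have h12 : ∀ᶠ x : ℝ in atTop, (1:ℝ)/2 < tail G (x + 1) / tail G x :=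
    hL.eventually_const_lt (by norm_num)
  obtain ⟨X0, hX0⟩ := eventually_atTop.1 h12
  set X := max X0 0 with hX
  have hstep : ∀ x, X ≤ x → tail G x / 2 ≤ tail G (x + 1) := by
    intro x hx
    have h := hX0 x (le_trans (le_max_left _ _) hx)
    have hp := hpos x
    rw [lt_div_iff₀ hp] at h
    linarith
  have hiter : ∀ j : ℕ, ∀ x, X ≤ x → (1/2 : ℝ)^j * tail G x ≤ tail G (x + j) := by
    intro j
    induction j with
    | zero => intro x _; simp
    | succ j ih =>
        intro x hx
        have h1 := ih x hx
        have h2 := hstep (x + j) (le_trans hx (by simp [Nat.cast_nonneg]))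
        have : (x : ℝ) + (j + 1 : ℕ) = (x + j) + 1 := by push_cast; ring
        rw [this]
        calc (1/2:ℝ)^(j+1) * tail G x = ((1/2:ℝ)^j * tail G x) / 2 := by ring
        _ ≤ tail G (x + j) / 2 := by linarith
        _ ≤ tail G ((x + j) + 1) := h2
  set j := ⌈b⌉₊ with hj
  refine ⟨min ((1/2:ℝ)^j) (tail G (X + b)), lt_min (by positivity) (hpos _), ?_⟩
  intro x hx
  rcases le_or_gt X x with h | h
  · calc min ((1/2:ℝ)^j) (tail G (X + b)) * tail G x ≤ (1/2:ℝ)^j * tail G x := by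
          apply mul_le_mul_of_nonneg_right (min_le_left _ _) (tail_nonneg _ _)
    _ ≤ tail G (x + j) := hiter j x h
    _ ≤ tail G (x + b) := tail_mono _ (by
          have : b ≤ (j : ℝ) := Nat.le_ceil b
          linarith)
  · calc min ((1/2:ℝ)^j) (tail G (X + b)) * tail G x ≤ tail G (X + b) * 1 :=
          mul_le_mul (min_le_right _ _) (tail_le_one _ _) (tail_nonneg _ _) (le_trans (tail_nonneg _ _) (le_refl _))
    _ = tail G (X + b) := mul_one _
    _ ≤ tail G (x + b) := tail_mono _ (by linarith)

lemma tail_nconv_pow (F : Measure ℝ) [IsProbabilityMeasure F] {a₀ : ℝ} (ha₀ : 0 ≤ a₀)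
    (hhalf : (1:ℝ)/2 ≤ tail F (-a₀)) :
    ∀ j : ℕ, (1/2:ℝ)^j ≤ tail (nconv F j) (-(j * a₀) - 1) := by
  intro j
  induction j with
  | zero =>
      simp only [Nat.cast_zero, zero_mul, neg_zero, zero_sub, pow_zero]
      show (1:ℝ) ≤ tail (Measure.dirac 0) (-1)
      unfold tail
      rw [Measure.dirac_apply' _ measurableSet_Ioi]
      simp
  | succ j ih =>
      show (1/2:ℝ)^(j+1) ≤ tail (mconv (nconv F j) F) (-((j+1 : ℕ) * a₀) - 1)
      have key := tail_mconv_ge (nconv F j) F (-((j+1 : ℕ) * a₀) - 1) a₀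
      have harg : (-((j+1 : ℕ) * a₀) - 1) + a₀ = -((j : ℕ) * a₀) - 1 := by push_cast; ring
      rw [harg] at key
      calc (1/2:ℝ)^(j+1) = (1/2:ℝ)^j * (1/2) := by ring
      _ ≤ tail (nconv F j) (-((j:ℕ) * a₀) - 1) * tail F (-a₀) := by
          apply mul_le_mul ih hhalf (by norm_num) (tail_nonneg _ _)
      _ ≤ _ := key

/-- If F^{*n} is long-tailed and in OS, and the counting variable τ satisfies the
summability condition with base C*(F^{*n}) - 1 + ε₀ (together with the Kesten-type
bound), then for every ε in (0,1) there is M ≥ 2 with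
∑_{k ≥ M} p_k tail(F^{*k})(x) ≤ ε tail(F^{*τ})(x) for all x ≥ 0. -/
theorem stmt16 (F : Measure ℝ) [IsProbabilityMeasure F] (n : ℕ) (hn : 1 ≤ n)
    (hL : LongTailed (nconv F n)) (hOS : OSClass (nconv F n))
    (p : ℕ → ℝ) (hp0 : ∀ k, 0 ≤ p k) (hpsum : ∑' k, p k = 1)
    (ε₀ : ℝ) (hε₀ : 0 < ε₀)
    (hsum : Summable (fun m : ℕ =>
      (∑ k ∈ Finset.Ioc (m * n) ((m + 1) * n), p k) *
        (Cstar (nconv F n) - 1 + ε₀) ^ (m + 1)))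
    (hK : ∃ K > 0, ∀ m : ℕ, 1 ≤ m → ∀ x : ℝ, 0 ≤ x →
      tail (nconv F (m * n)) x ≤
        K * (Cstar (nconv F n) - 1 + ε₀) ^ m * tail (nconv F n) x) :
    ∀ ε : ℝ, 0 < ε → ε < 1 → ∃ M : ℕ, 2 ≤ M ∧ ∀ x : ℝ, 0 ≤ x →
      (∑' k : ℕ, if M ≤ k then p k * tail (nconv F k) x else 0) ≤
        ε * tail (Measure.sum (fun k => ENNReal.ofReal (p k) • nconv F k)) x := by
  classical
  intro ε hε hε1
  obtain ⟨K, hK0, hKb⟩ := hK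
  have hpos : ∀ x, 0 < tail (nconv F n) x := hOS.1
  set C : ℝ := Cstar (nconv F n) - 1 + ε₀ with hCdef
  have hC : 0 < C := by
    have h1 := hKb 1 le_rfl 0 le_rfl
    rw [one_mul, pow_one] at h1
    have h2 := hpos 0
    by_contra hcon
    push_neg at hcon
    have hKt : 0 < K * tail (nconv F n) 0 := mul_pos hK0 h2
    nlinarith [mul_nonneg (neg_nonneg.2 hcon) hKt.le]
  have hp_summ : Summable p := by
    by_contra h
    rw [tsum_eq_zero_of_not_summable h] at hpsum
    norm_num at hpsum
  -- trivial case: p vanishes from n on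
  by_cases hcase : ∀ k, n ≤ k → p k = 0
  · refine ⟨n + 2, by omega, fun x hx => ?_⟩
    have hz : ∀ k : ℕ, (if n + 2 ≤ k then p k * tail (nconv F k) x else 0) = 0 := by
      intro k
      split
      · rw [hcase k (by omega), zero_mul]
      · rfl
    rw [tsum_congr hz, tsum_zero]
    exact mul_nonneg hε.le (tail_nonneg _ _)
  push_neg at hcase
  obtain ⟨ks, hksn, hksne⟩ := hcase
  have hks : 0 < p ks := lt_of_le_of_ne (hp0 ks) (Ne.symm hksne)
  -- constants
  obtain ⟨a₀, ha₀, hhalf⟩ := exists_tail_ge_half F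
  set a : ℝ := n * a₀ + 1 with hadef
  have ha : 0 ≤ a := by positivity
  have hq : ∀ j : ℕ, j ≤ n → (1/2:ℝ)^n ≤ tail (nconv F j) (-a) := by
    intro j hj
    have h1 := tail_nconv_pow F ha₀ hhalf j
    have h2 : tail (nconv F j) (-((j:ℕ) * a₀) - 1) ≤ tail (nconv F j) (-a) := by
      apply tail_mono
      have : (j:ℝ) * a₀ ≤ (n:ℝ) * a₀ :=
        mul_le_mul_of_nonneg_right (by exact_mod_cast hj) ha₀
      rw [hadef]; push_cast; linarith
    calc (1/2:ℝ)^n ≤ (1/2:ℝ)^j := pow_le_pow_of_le_one (by norm_num) (by norm_num) hj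
    _ ≤ _ := le_trans h1 h2
  obtain ⟨c', hc'0, hc'⟩ := longtail_shift hL hpos a ha
  set A : ℕ → ℝ := fun m => (2:ℝ)^n * ((K / c') * C^m + (tail (nconv F n) a)⁻¹) with hAdef
  have hA0 : ∀ m, 0 ≤ A m := by
    intro m
    have := hpos a
    have h2 : (0:ℝ) ≤ (K/c') * C^m := by positivity
    have h3 : (0:ℝ) ≤ (tail (nconv F n) a)⁻¹ := by positivity
    positivity
  -- the per-k key bound
  have hkey : ∀ m k : ℕ, m * n < k → k ≤ (m+1)*n → ∀ x : ℝ, 0 ≤ x →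
      tail (nconv F k) x ≤ A (m+1) * tail (nconv F n) x := by
    intro m k hk1 hk2 x hx
    set j : ℕ := (m+1)*n - k with hjdef
    have hmn : (m+1)*n = m*n + n := by ring
    have hjn : j ≤ n := by omega
    have hkj : k + j = (m+1)*n := by omega
    have hsplit : nconv F ((m+1)*n) = mconv (nconv F k) (nconv F j) := by
      rw [← hkj]; exact nconv_add F k j
    have hxa : x - a + a = x := by ring
    have step1 : tail (nconv F k) x * (1/2:ℝ)^n ≤ tail (nconv F ((m+1)*n)) (x - a) := by
      have h := tail_mconv_ge (nconv F k) (nconv F j) (x - a) a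
      rw [hxa] at h
      rw [hsplit]
      exact le_trans (mul_le_mul_of_nonneg_left (hq j hjn) (tail_nonneg _ _)) h
    have h2n : tail (nconv F k) x ≤ (2:ℝ)^n * tail (nconv F ((m+1)*n)) (x - a) := by
      have hpow : ((1:ℝ)/2)^n * 2^n = 1 := by rw [← mul_pow]; norm_num
      calc tail (nconv F k) x = (tail (nconv F k) x * (1/2:ℝ)^n) * 2^n := by
            rw [mul_assoc, hpow, mul_one]
      _ ≤ tail (nconv F ((m+1)*n)) (x - a) * 2^n :=
            mul_le_mul_of_nonneg_right step1 (by positivity)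
      _ = (2:ℝ)^n * tail (nconv F ((m+1)*n)) (x - a) := mul_comm _ _
    have hAsplit : A (m+1) * tail (nconv F n) x =
        (2:ℝ)^n * ((K/c') * C^(m+1)) * tail (nconv F n) x
          + (2:ℝ)^n * (tail (nconv F n) a)⁻¹ * tail (nconv F n) x := by
      rw [hAdef]; ring
    rcases le_or_gt a x with hax | hax
    · have hKB := hKb (m+1) (by omega) (x - a) (by linarith)
      have hc := hc' (x - a) (by linarith)
      rw [hxa] at hc
      have hdiv : tail (nconv F n) (x - a) ≤ tail (nconv F n) x / c' := by
        rw [le_div_iff₀ hc'0]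
        linarith
      calc tail (nconv F k) x ≤ (2:ℝ)^n * tail (nconv F ((m+1)*n)) (x - a) := h2n
      _ ≤ (2:ℝ)^n * (K * C^(m+1) * tail (nconv F n) (x - a)) :=
            mul_le_mul_of_nonneg_left hKB (by positivity)
      _ ≤ (2:ℝ)^n * (K * C^(m+1) * (tail (nconv F n) x / c')) := by
            apply mul_le_mul_of_nonneg_left _ (by positivity)
            exact mul_le_mul_of_nonneg_left hdiv (by positivity)
      _ = (2:ℝ)^n * ((K/c') * C^(m+1)) * tail (nconv F n) x := by
            field_simp
      _ ≤ A (m+1) * tail (nconv F n) x := by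
            rw [hAsplit]
            have : (0:ℝ) ≤ (2:ℝ)^n * (tail (nconv F n) a)⁻¹ * tail (nconv F n) x := by
              have := hpos a; have := (hpos x).le; positivity
            linarith
    · have h1 : tail (nconv F n) a ≤ tail (nconv F n) x := tail_mono _ hax.le
      have h2 : (1:ℝ) ≤ (tail (nconv F n) a)⁻¹ * tail (nconv F n) x := by
        rw [← div_eq_inv_mul, le_div_iff₀ (hpos a)]
        linarith
      have h3 : (1:ℝ) ≤ (2:ℝ)^n := one_le_pow₀ (by norm_num : (1:ℝ) ≤ 2)
      calc tail (nconv F k) x ≤ 1 := tail_le_one _ _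
      _ ≤ (2:ℝ)^n * (tail (nconv F n) a)⁻¹ * tail (nconv F n) x := by
            rw [mul_assoc]
            exact le_trans h2 (le_mul_of_one_le_left (le_trans zero_le_one h2) h3)
      _ ≤ A (m+1) * tail (nconv F n) x := by
            rw [hAsplit]
            have : (0:ℝ) ≤ (2:ℝ)^n * ((K/c') * C^(m+1)) * tail (nconv F n) x := by
              have := (hpos x).le; positivity
            linarith
  -- block sums
  set blockp : ℕ → ℝ := fun m => ∑ k ∈ Finset.Ioc (m * n) ((m + 1) * n), p k with hbp
  have hbp0 : ∀ m, 0 ≤ blockp m := fun m => Finset.sum_nonneg (fun k _ => hp0 k)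
  have hbp_summ : Summable blockp := by
    apply summable_of_sum_range_le (c := 1) hbp0
    intro M
    have hpart : ∑ m ∈ Finset.range M, blockp m = ∑ k ∈ Finset.Ioc 0 (M * n), p k := by
      induction M with
      | zero => simp
      | succ M ih =>
          rw [Finset.sum_range_succ, ih, hbp]
          exact Finset.sum_Ioc_consecutive p (Nat.zero_le _)
            (Nat.mul_le_mul_right n (Nat.le_succ M))
    rw [hpart, ← hpsum]
    exact Summable.sum_le_tsum _ (fun k _ => hp0 k) hp_summ
  have hBsum : Summable (fun m => blockp m * A (m+1)) := by
    have heq : (fun m => blockp m * A (m+1)) =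
        (fun m => ((2:ℝ)^n * (K/c')) * (blockp m * C^(m+1))
          + ((2:ℝ)^n * (tail (nconv F n) a)⁻¹) * blockp m) := by
      funext m
      rw [hAdef]
      ring
    rw [heq]
    exact (hsum.mul_left _).add (hbp_summ.mul_left _)
  -- lower bound for the denominator
  obtain ⟨bs, hbs, hhalfs⟩ := exists_tail_ge_half (nconv F (ks - n))
  obtain ⟨c'', hc''0, hc''⟩ := longtail_shift hL hpos bs hbs
  have hlow : ∀ x : ℝ, 0 ≤ x →
      (c''/2) * tail (nconv F n) x ≤ tail (nconv F ks) x := by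
    intro x hx
    have hsplit : nconv F ks = mconv (nconv F n) (nconv F (ks - n)) := by
      rw [← nconv_add]
      congr 1
      omega
    have h := tail_mconv_ge (nconv F n) (nconv F (ks - n)) x bs
    rw [hsplit]
    calc (c''/2) * tail (nconv F n) x = (c'' * tail (nconv F n) x) * (1/2) := by ring
    _ ≤ tail (nconv F n) (x + bs) * tail (nconv F (ks - n)) (-bs) := by
          apply mul_le_mul (hc'' x hx) hhalfs (by norm_num)
          exact tail_nonneg _ _
    _ ≤ _ := h
  have hτ : ∀ x : ℝ,
      p ks * tail (nconv F ks) x ≤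
        tail (Measure.sum (fun k => ENNReal.ofReal (p k) • nconv F k)) x := by
    intro x
    have happ : (Measure.sum fun k => ENNReal.ofReal (p k) • nconv F k) (Set.Ioi x)
        = ∑' k, ENNReal.ofReal (p k) * (nconv F k) (Set.Ioi x) := by
      rw [Measure.sum_apply _ measurableSet_Ioi]
      simp [Measure.smul_apply, smul_eq_mul]
    have hle1 : (∑' k, ENNReal.ofReal (p k) * (nconv F k) (Set.Ioi x)) ≤ 1 := by
      calc (∑' k, ENNReal.ofReal (p k) * (nconv F k) (Set.Ioi x))
          ≤ ∑' k, ENNReal.ofReal (p k) * 1 :=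
            ENNReal.tsum_le_tsum (fun k => mul_le_mul_right prob_le_one _)
      _ = ∑' k, ENNReal.ofReal (p k) := by simp
      _ = ENNReal.ofReal (∑' k, p k) := (ENNReal.ofReal_tsum_of_nonneg hp0 hp_summ).symm
      _ = 1 := by rw [hpsum, ENNReal.ofReal_one]
    have hne : (∑' k, ENNReal.ofReal (p k) * (nconv F k) (Set.Ioi x)) ≠ ⊤ :=
      ne_top_of_le_ne_top ENNReal.one_ne_top hle1
    have hterm : ENNReal.ofReal (p ks) * (nconv F ks) (Set.Ioi x)
        ≤ ∑' k, ENNReal.ofReal (p k) * (nconv F k) (Set.Ioi x) := ENNReal.le_tsum ks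
    have := ENNReal.toReal_mono hne hterm
    rw [ENNReal.toReal_mul, ENNReal.toReal_ofReal (hp0 ks)] at this
    unfold tail
    rwa [happ]
  -- choose m₀
  have hδ : 0 < ε * (p ks * (c''/2)) := by positivity
  have htendB := tendsto_sum_nat_add (fun m => blockp m * A (m+1))
  obtain ⟨m₀, hm₀⟩ := (htendB.eventually_lt_const hδ).exists
  -- final M
  refine ⟨m₀ * n + 2, by omega, fun x hx => ?_⟩
  set g : ℕ → ℝ := fun k => if m₀ * n + 2 ≤ k then p k * tail (nconv F k) x else 0 with hgdef
  have hg0 : ∀ k, 0 ≤ g k := by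
    intro k
    simp only [hgdef]
    split
    · exact mul_nonneg (hp0 k) (tail_nonneg _ _)
    · exact le_refl 0
  have hgle : ∀ k, g k ≤ p k := by
    intro k
    simp only [hgdef]
    split
    · calc p k * tail (nconv F k) x ≤ p k * 1 :=
            mul_le_mul_of_nonneg_left (tail_le_one _ _) (hp0 k)
      _ = p k := mul_one _
    · exact hp0 k
  have hg_summ : Summable g := Summable.of_nonneg_of_le hg0 hgle hp_summ
  have hBsum' : Summable (fun i => blockp (i + m₀) * A ((i + m₀) + 1)) :=
    (summable_nat_add_iff m₀).2 hBsum
  -- block regrouping bound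
  have hblockbound : ∀ m : ℕ,
      ∑ k ∈ Finset.Ioc (m*n) ((m+1)*n), p k * tail (nconv F k) x
        ≤ (blockp m * A (m+1)) * tail (nconv F n) x := by
    intro m
    calc ∑ k ∈ Finset.Ioc (m*n) ((m+1)*n), p k * tail (nconv F k) x
        ≤ ∑ k ∈ Finset.Ioc (m*n) ((m+1)*n), p k * (A (m+1) * tail (nconv F n) x) := by
          apply Finset.sum_le_sum
          intro k hk
          obtain ⟨h1, h2⟩ := Finset.mem_Ioc.1 hk
          exact mul_le_mul_of_nonneg_left (hkey m k h1 h2 x hx) (hp0 k)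
    _ = (blockp m * A (m+1)) * tail (nconv F n) x := by
          rw [← Finset.sum_mul]
          simp only [hbp, hAdef]
          ring
  have hgrp : ∀ d : ℕ,
      ∑ k ∈ Finset.Ioc (m₀*n) ((m₀+d)*n), p k * tail (nconv F k) x
        ≤ (∑ i ∈ Finset.range d, blockp (m₀+i) * A ((m₀+i)+1)) * tail (nconv F n) x := by
    intro d
    induction d with
    | zero => simp
    | succ d ih =>
        have h1 : m₀*n ≤ (m₀+d)*n := Nat.mul_le_mul_right n (Nat.le_add_right m₀ d)
        have h2 : (m₀+d)*n ≤ (m₀+(d+1))*n := Nat.mul_le_mul_right n (by omega)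
        have hsplit : ∑ k ∈ Finset.Ioc (m₀*n) ((m₀+(d+1))*n), p k * tail (nconv F k) x
            = ∑ k ∈ Finset.Ioc (m₀*n) ((m₀+d)*n), p k * tail (nconv F k) x
              + ∑ k ∈ Finset.Ioc ((m₀+d)*n) ((m₀+(d+1))*n), p k * tail (nconv F k) x :=
          (Finset.sum_Ioc_consecutive (fun k => p k * tail (nconv F k) x) h1 h2).symm
        rw [hsplit, Finset.sum_range_succ]
        exact le_trans (add_le_add ih (hblockbound (m₀+d))) (le_of_eq (add_mul _ _ _).symm)
  have htsum_tail : ∀ d : ℕ,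
      (∑ i ∈ Finset.range d, blockp (m₀+i) * A ((m₀+i)+1))
        ≤ ∑' i, blockp (i + m₀) * A ((i + m₀) + 1) := by
    intro d
    have : (∑ i ∈ Finset.range d, blockp (m₀+i) * A ((m₀+i)+1))
        = ∑ i ∈ Finset.range d, blockp (i+m₀) * A ((i+m₀)+1) := by
      apply Finset.sum_congr rfl
      intro i _
      rw [Nat.add_comm m₀ i]
    rw [this]
    exact Summable.sum_le_tsum _ (fun i _ => mul_nonneg (hbp0 _) (hA0 _)) hBsum'
  have hmain : (∑' k, g k) ≤ (∑' i, blockp (i + m₀) * A ((i + m₀) + 1)) * tail (nconv F n) x := by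
    apply Summable.tsum_le_of_sum_le hg_summ
    intro s
    obtain ⟨N, hN⟩ := s.exists_nat_subset_range
    have hsub : s.filter (fun k => m₀ * n + 2 ≤ k) ⊆ Finset.Ioc (m₀*n) ((m₀+N)*n) := by
      intro k hk
      rw [Finset.mem_filter] at hk
      rw [Finset.mem_Ioc]
      constructor
      · omega
      · have h1 : k < N := Finset.mem_range.1 (hN hk.1)
        have h2 : N ≤ N * n := Nat.le_mul_of_pos_right N (by omega)
        have h3 : N * n ≤ (m₀+N) * n := Nat.mul_le_mul_right n (by omega)
        omega
    calc ∑ k ∈ s, g k = ∑ k ∈ s.filter (fun k => m₀ * n + 2 ≤ k), p k * tail (nconv F k) x :=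
          (Finset.sum_filter _ _).symm
    _ ≤ ∑ k ∈ Finset.Ioc (m₀*n) ((m₀+N)*n), p k * tail (nconv F k) x := by
          apply Finset.sum_le_sum_of_subset_of_nonneg hsub
          intro k _ _
          exact mul_nonneg (hp0 k) (tail_nonneg _ _)
    _ ≤ (∑ i ∈ Finset.range N, blockp (m₀+i) * A ((m₀+i)+1)) * tail (nconv F n) x := hgrp N
    _ ≤ (∑' i, blockp (i + m₀) * A ((i + m₀) + 1)) * tail (nconv F n) x :=
          mul_le_mul_of_nonneg_right (htsum_tail N) (tail_nonneg _ _)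
  calc (∑' k, g k) ≤ (∑' i, blockp (i + m₀) * A ((i + m₀) + 1)) * tail (nconv F n) x := hmain
  _ ≤ (ε * (p ks * (c''/2))) * tail (nconv F n) x :=
        mul_le_mul_of_nonneg_right hm₀.le (tail_nonneg _ _)
  _ = ε * (p ks * ((c''/2) * tail (nconv F n) x)) := by ring
  _ ≤ ε * (p ks * tail (nconv F ks) x) := by
        apply mul_le_mul_of_nonneg_left _ hε.le
        exact mul_le_mul_of_nonneg_left (hlow x hx) (hp0 ks)
  _ ≤ ε * tail (Measure.sum (fun k => ENNReal.ofReal (p k) • nconv F k)) x :=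
        mul_le_mul_of_nonneg_left (hτ x) hε.le
end

section
/- Let F be a distribution on [0,∞) with \bar{F}(x) > 0 for all x, F^{*2} ∈ L ∩ OS, and assume: (i) for any ε₀ ∈ (0,1) there is K > 0 with \overline{F^{*2m}}(x) ≤ K(C*(F^{*2}) - 1 + ε₀)^m \overline{F^{*2}}(x) for all m ≥ 1, x ≥ 0, and (ii) limsup_{x→∞} \overline{F^{*2m}}(x)/\overline{F^{*2}}(x) ≤ m(C*(F^{*2}) - 1)^{m-1} for all m ≥ 1. If τ is a counting random variable with pₖ = P(τ = k) satisfying ∑_{m≥1}(p_{2m-1}+p_{2m})(C*(F^{*2}) - 1 + ε₀)^m < ∞ for some ε₀ > 0, then limsup_{x→∞} \overline{F^{*τ}}(x)/\overline{F^{*2}}(x) ≤ ∑_{m=1}^∞ m(p_{2m-1}+p_{2m})(C*(F^{*2}) - 1)^{m-1} < ∞. -/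
open MeasureTheory Filter Set Asymptotics

/-! ### Auxiliary lemmas -/

lemma mconv_apply (μ ν : Measure ℝ) [SFinite μ] [SFinite ν] {s : Set ℝ} (hs : MeasurableSet s) :
    mconv μ ν s = (μ.prod ν) ((fun p : ℝ × ℝ => p.1 + p.2) ⁻¹' s) :=
  Measure.map_apply measurable_add hs

instance mconv_prob (μ ν : Measure ℝ) [IsProbabilityMeasure μ] [IsProbabilityMeasure ν] :
    IsProbabilityMeasure (mconv μ ν) :=
  Measure.isProbabilityMeasure_map measurable_add.aemeasurable

instance nconv_prob (F : Measure ℝ) [IsProbabilityMeasure F] (n : ℕ) :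
    IsProbabilityMeasure (nconv F n) := by
  induction n with
  | zero => exact Measure.dirac.isProbabilityMeasure
  | succ n ih => exact mconv_prob _ _

lemma mconv_supp (μ ν : Measure ℝ) [IsProbabilityMeasure μ] [IsProbabilityMeasure ν]
    (hμ : μ (Set.Iio 0) = 0) (hν : ν (Set.Iio 0) = 0) : mconv μ ν (Set.Iio 0) = 0 := by
  rw [mconv_apply μ ν measurableSet_Iio]
  have hsub : (fun p : ℝ × ℝ => p.1 + p.2) ⁻¹' Set.Iio 0 ⊆
      (Set.Iio 0 ×ˢ Set.univ) ∪ (Set.univ ×ˢ Set.Iio 0) := by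
    rintro ⟨a, b⟩ h
    simp only [Set.mem_preimage, Set.mem_Iio] at h
    by_cases ha : a < 0
    · exact Or.inl ⟨ha, trivial⟩
    · exact Or.inr ⟨trivial, show b < 0 by push_neg at ha; linarith⟩
  refine le_antisymm ?_ zero_le
  calc (μ.prod ν) ((fun p : ℝ × ℝ => p.1 + p.2) ⁻¹' Set.Iio 0)
      ≤ (μ.prod ν) ((Set.Iio 0 ×ˢ Set.univ) ∪ (Set.univ ×ˢ Set.Iio 0)) := measure_mono hsub
    _ ≤ (μ.prod ν) (Set.Iio 0 ×ˢ Set.univ) + (μ.prod ν) (Set.univ ×ˢ Set.Iio 0) :=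
        measure_union_le _ _
    _ = 0 := by rw [Measure.prod_prod, Measure.prod_prod, hμ, hν]; simp

lemma nconv_supp (F : Measure ℝ) [IsProbabilityMeasure F] (hsupp : F (Set.Iio 0) = 0) (n : ℕ) :
    nconv F n (Set.Iio 0) = 0 := by
  induction n with
  | zero =>
    simp only [nconv]
    rw [Measure.dirac_apply' 0 measurableSet_Iio]
    simp
  | succ n ih => exact mconv_supp _ _ ih hsupp

lemma mconv_mono (μ ν : Measure ℝ) [IsProbabilityMeasure μ] [IsProbabilityMeasure ν]
    (hν : ν (Set.Iio 0) = 0) (x : ℝ) : μ (Set.Ioi x) ≤ mconv μ ν (Set.Ioi x) := by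
  rw [mconv_apply μ ν measurableSet_Ioi]
  have hν1 : ν (Set.Ici 0) = 1 := by
    have h := measure_compl (μ := ν) (measurableSet_Iio (a := (0:ℝ))) (measure_ne_top ν _)
    rw [hν, Set.compl_Iio] at h
    simpa using h
  have hsub : Set.Ioi x ×ˢ Set.Ici 0 ⊆ (fun p : ℝ × ℝ => p.1 + p.2) ⁻¹' Set.Ioi x := by
    rintro ⟨a, b⟩ ⟨ha, hb⟩
    simp only [Set.mem_preimage, Set.mem_Ioi] at *
    simp only [Set.mem_Ici] at hb
    linarith
  calc μ (Set.Ioi x) = μ (Set.Ioi x) * ν (Set.Ici 0) := by rw [hν1, mul_one]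
    _ = (μ.prod ν) (Set.Ioi x ×ˢ Set.Ici 0) := (Measure.prod_prod _ _).symm
    _ ≤ _ := measure_mono hsub

lemma tail_mconv_mono (μ ν : Measure ℝ) [IsProbabilityMeasure μ] [IsProbabilityMeasure ν]
    (hν : ν (Set.Iio 0) = 0) (x : ℝ) : tail μ x ≤ tail (mconv μ ν) x :=
  ENNReal.toReal_mono (measure_ne_top _ _) (mconv_mono μ ν hν x)

lemma nconv_mono (F : Measure ℝ) [IsProbabilityMeasure F] (hsupp : F (Set.Iio 0) = 0)
    (n : ℕ) (x : ℝ) : nconv F n (Set.Ioi x) ≤ nconv F (n + 1) (Set.Ioi x) :=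
  mconv_mono _ F hsupp x

lemma one_le_Cstar (G : Measure ℝ) [IsProbabilityMeasure G] (hsuppG : G (Set.Iio 0) = 0)
    (hposG : ∀ x, 0 < tail G x) (M : ℝ)
    (hM : ∀ᶠ x in atTop, tail (mconv G G) x ≤ M * tail G x) : 1 ≤ Cstar G := by
  have hbdd : IsBoundedUnder (· ≤ ·) atTop (fun x => tail (mconv G G) x / tail G x) := by
    refine ⟨M, eventually_map.mpr ?_⟩
    filter_upwards [hM] with x hx
    exact (div_le_iff₀ (hposG x)).mpr (by linarith)
  refine le_limsup_of_frequently_le ?_ hbdd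
  refine (Eventually.of_forall fun x => ?_).frequently
  rw [one_le_div (hposG x)]
  exact tail_mconv_mono G G hsuppG x

lemma summable_part {C ε₀ : ℝ} (hC : 1 ≤ C) (hε₀ : 0 < ε₀) (q : ℕ → ℝ) (hq0 : ∀ m, 0 ≤ q m)
    (hsum : Summable fun m => q m * (C - 1 + ε₀) ^ (m + 1)) :
    Summable fun m : ℕ => ((m : ℝ) + 1) * q m * (C - 1) ^ m := by
  set D := C - 1 with hD
  have hD0 : 0 ≤ D := by simp [hD]; linarith
  have hE : 0 < D + ε₀ := by linarith
  have hr : D / (D + ε₀) < 1 := (div_lt_one hE).mpr (by linarith)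
  have hr0 : 0 ≤ D / (D + ε₀) := div_nonneg hD0 hE.le
  have hts : Summable (fun m : ℕ => ((m : ℝ) + 1) * (D / (D + ε₀)) ^ m) := by
    have h1 := summable_pow_mul_geometric_of_norm_lt_one 1 (r := D / (D + ε₀))
      (by rwa [Real.norm_eq_abs, abs_of_nonneg hr0])
    have h2 := summable_geometric_of_lt_one hr0 hr
    have := h1.add h2
    simpa [add_mul, pow_one] using this
  obtain ⟨B, hB⟩ := hts.tendsto_atTop_zero.bddAbove_range
  have key : ∀ m : ℕ, ((m : ℝ) + 1) * D ^ m ≤ (B / (D + ε₀)) * (D + ε₀) ^ (m + 1) := by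
    intro m
    have h1 : ((m : ℝ) + 1) * (D / (D + ε₀)) ^ m ≤ B := hB ⟨m, rfl⟩
    have h2 : D ^ m = (D / (D + ε₀)) ^ m * (D + ε₀) ^ m := by
      rw [← mul_pow, div_mul_cancel₀ _ hE.ne']
    calc ((m : ℝ) + 1) * D ^ m = (((m : ℝ) + 1) * (D / (D + ε₀)) ^ m) * (D + ε₀) ^ m := by
          rw [h2]; ring
      _ ≤ B * (D + ε₀) ^ m := mul_le_mul_of_nonneg_right h1 (pow_nonneg hE.le m)
      _ = (B / (D + ε₀)) * (D + ε₀) ^ (m + 1) := by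
          rw [pow_succ]; field_simp
  refine Summable.of_nonneg_of_le (fun m => ?_) (fun m => ?_) (hsum.mul_left (B / (D + ε₀)))
  · exact mul_nonneg (mul_nonneg (by positivity) (hq0 m)) (pow_nonneg hD0 m)
  · calc ((m : ℝ) + 1) * q m * D ^ m = q m * (((m : ℝ) + 1) * D ^ m) := by ring
      _ ≤ q m * ((B / (D + ε₀)) * (D + ε₀) ^ (m + 1)) :=
          mul_le_mul_of_nonneg_left (key m) (hq0 m)
      _ = B / (D + ε₀) * (q m * (D + ε₀) ^ (m + 1)) := by ring

lemma tail_sum_bound (F : Measure ℝ) [IsProbabilityMeasure F] (hsupp : F (Set.Iio 0) = 0)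
    (p : ℕ → ℝ) (hp0 : ∀ k, 0 ≤ p k) (hpS : Summable p) (hpsum : ∑' k, p k = 1)
    {x : ℝ} (hx : 0 ≤ x) :
    tail (Measure.sum (fun k => ENNReal.ofReal (p k) • nconv F k)) x ≤
      ∑' m : ℕ, (p (2 * m + 1) + p (2 * m + 2)) * tail (nconv F (2 * (m + 1))) x := by
  set a : ℕ → ENNReal := fun k => ENNReal.ofReal (p k) * nconv F k (Set.Ioi x) with ha
  set b : ℕ → ENNReal := fun m =>
    (ENNReal.ofReal (p (2 * m + 1)) + ENNReal.ofReal (p (2 * m + 2))) *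
      nconv F (2 * (m + 1)) (Set.Ioi x) with hb
  have hsum_apply :
      (Measure.sum (fun k => ENNReal.ofReal (p k) • nconv F k)) (Set.Ioi x) = ∑' k, a k := by
    rw [Measure.sum_apply _ measurableSet_Ioi]
    simp [ha, Measure.smul_apply, smul_eq_mul]
  have ha0 : a 0 = 0 := by
    have : nconv F 0 (Set.Ioi x) = 0 := by
      show Measure.dirac 0 (Set.Ioi x) = 0
      rw [Measure.dirac_apply' 0 measurableSet_Ioi]
      simp [Set.indicator, not_lt.mpr hx]
    simp [ha, this]
  have hmono2 : ∀ m : ℕ, nconv F (2 * m + 1) (Set.Ioi x) ≤ nconv F (2 * (m + 1)) (Set.Ioi x) := by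
    intro m
    have h : 2 * (m + 1) = (2 * m + 1) + 1 := by ring
    rw [h]
    exact nconv_mono F hsupp _ x
  have hle : ∑' k, a k ≤ ∑' m, b m := by
    have he : (∑' m, a (2 * m)) + ∑' m, a (2 * m + 1) = ∑' k, a k :=
      tsum_even_add_odd ENNReal.summable ENNReal.summable
    have hz : (∑' m, a (2 * m)) = a 0 + ∑' m, a (2 * (m + 1)) :=
      tsum_eq_zero_add' ENNReal.summable
    rw [← he, hz, ha0, zero_add, ← ENNReal.tsum_add]
    refine ENNReal.tsum_le_tsum fun m => ?_
    have h1 : a (2 * (m + 1)) ≤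
        ENNReal.ofReal (p (2 * m + 2)) * nconv F (2 * (m + 1)) (Set.Ioi x) := by
      have h : 2 * (m + 1) = 2 * m + 2 := by ring
      rw [ha]; simp only []
      rw [h]
    have h2 : a (2 * m + 1) ≤
        ENNReal.ofReal (p (2 * m + 1)) * nconv F (2 * (m + 1)) (Set.Ioi x) := by
      rw [ha]; exact mul_le_mul_right (hmono2 m) _
    calc a (2 * (m + 1)) + a (2 * m + 1)
        ≤ ENNReal.ofReal (p (2 * m + 2)) * nconv F (2 * (m + 1)) (Set.Ioi x) +
          ENNReal.ofReal (p (2 * m + 1)) * nconv F (2 * (m + 1)) (Set.Ioi x) := add_le_add h1 h2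
      _ = b m := by rw [hb]; ring
  have hbfin : ∀ m, b m ≠ ⊤ :=
    fun m => ENNReal.mul_ne_top
      (ENNReal.add_ne_top.mpr ⟨ENNReal.ofReal_ne_top, ENNReal.ofReal_ne_top⟩) (measure_ne_top _ _)
  have htop : (∑' m, b m) ≠ ⊤ := by
    have h1 : (∑' m, b m) ≤
        ∑' m, (ENNReal.ofReal (p (2 * m + 1)) + ENNReal.ofReal (p (2 * m + 2))) := by
      refine ENNReal.tsum_le_tsum fun m => ?_
      rw [hb]
      calc (ENNReal.ofReal (p (2 * m + 1)) + ENNReal.ofReal (p (2 * m + 2))) *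
            nconv F (2 * (m + 1)) (Set.Ioi x)
          ≤ (ENNReal.ofReal (p (2 * m + 1)) + ENNReal.ofReal (p (2 * m + 2))) * 1 :=
            mul_le_mul_right prob_le_one _
        _ = _ := mul_one _
    have h2 : (∑' m, (ENNReal.ofReal (p (2 * m + 1)) + ENNReal.ofReal (p (2 * m + 2)))) ≤
        ENNReal.ofReal 1 + ENNReal.ofReal 1 := by
      rw [ENNReal.tsum_add]
      have o1 : (∑' m : ℕ, ENNReal.ofReal (p (2 * m + 1))) ≤ ∑' k, ENNReal.ofReal (p k) :=
        ENNReal.tsum_comp_le_tsum_of_injective (f := fun m => 2 * m + 1)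
          (fun u v h => by simp only at h; omega) _
      have o2 : (∑' m : ℕ, ENNReal.ofReal (p (2 * m + 2))) ≤ ∑' k, ENNReal.ofReal (p k) :=
        ENNReal.tsum_comp_le_tsum_of_injective (f := fun m => 2 * m + 2)
          (fun u v h => by simp only at h; omega) _
      have ht : (∑' k, ENNReal.ofReal (p k)) = ENNReal.ofReal 1 := by
        rw [← ENNReal.ofReal_tsum_of_nonneg hp0 hpS, hpsum]
      rw [ht] at o1 o2
      exact add_le_add o1 o2
    exact ne_top_of_le_ne_top (by simp) (h1.trans h2)
  have step : tail (Measure.sum (fun k => ENNReal.ofReal (p k) • nconv F k)) x ≤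
      (∑' m, b m).toReal := by
    rw [tail, hsum_apply]
    exact ENNReal.toReal_mono htop hle
  refine step.trans (le_of_eq ?_)
  rw [ENNReal.tsum_toReal_eq hbfin]
  refine tsum_congr fun m => ?_
  rw [hb]
  simp only []
  rw [ENNReal.toReal_mul, ENNReal.toReal_add ENNReal.ofReal_ne_top ENNReal.ofReal_ne_top,
    ENNReal.toReal_ofReal (hp0 _), ENNReal.toReal_ofReal (hp0 _)]
  rfl

lemma qsum_le_one (p : ℕ → ℝ) (hp0 : ∀ k, 0 ≤ p k) (hpS : Summable p) (hpsum : ∑' k, p k = 1)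
    (N : ℕ) : ∑ m ∈ Finset.range N, (p (2 * m + 1) + p (2 * m + 2)) ≤ 1 := by
  have hshift : Summable (fun k => p (k + 1)) := (summable_nat_add_iff 1).mpr hpS
  have hkey : ∑ m ∈ Finset.range N, (p (2 * m + 1) + p (2 * m + 2)) =
      ∑ k ∈ Finset.range (2 * N), p (k + 1) := by
    induction N with
    | zero => simp
    | succ N ih =>
      rw [Finset.sum_range_succ, ih]
      have h2 : 2 * (N + 1) = (2 * N + 1) + 1 := by ring
      rw [h2, Finset.sum_range_succ, Finset.sum_range_succ]
      ring_nf
  rw [hkey]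
  have h1 : ∑ k ∈ Finset.range (2 * N), p (k + 1) ≤ ∑' k, p (k + 1) :=
    Summable.sum_le_tsum _ (fun i _ => hp0 _) hshift
  have h2 : (∑' k, p (k + 1)) ≤ 1 := by
    have h := tsum_eq_zero_add' (f := p) hshift
    rw [hpsum] at h
    linarith [hp0 0]
  linarith

/-! ### Main theorem -/

/-- Upper bound for limsup tail(F^{*τ})/tail(F^{*2}): under a Kesten-type bound (i),
the per-term limsup bound (ii) and the summability condition on τ, the limsup of
tail(F^{*τ})(x)/tail(F^{*2})(x) is bounded by the (finite) series
∑_m m (p_{2m-1} + p_{2m}) (C*(F^{*2}) - 1)^{m-1}. -/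
theorem stmt17 (F : Measure ℝ) [IsProbabilityMeasure F] (hsupp : F (Set.Iio 0) = 0)
    (hpos : ∀ x, 0 < tail F x)
    (hL : LongTailed (nconv F 2)) (hOS : OSClass (nconv F 2))
    (hi : ∀ ε₀ ∈ Set.Ioo (0:ℝ) 1, ∃ K > 0, ∀ m : ℕ, 1 ≤ m → ∀ x : ℝ, 0 ≤ x →
      tail (nconv F (2 * m)) x ≤
        K * (Cstar (nconv F 2) - 1 + ε₀) ^ m * tail (nconv F 2) x)
    (hii : ∀ m : ℕ, 1 ≤ m →
      atTop.limsup (fun x => tail (nconv F (2 * m)) x / tail (nconv F 2) x) ≤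
        (m : ℝ) * (Cstar (nconv F 2) - 1) ^ (m - 1))
    (p : ℕ → ℝ) (hp0 : ∀ k, 0 ≤ p k) (hpsum : ∑' k, p k = 1)
    (ε₀ : ℝ) (hε₀ : 0 < ε₀)
    (hsum : Summable (fun m : ℕ =>
      (p (2 * m + 1) + p (2 * m + 2)) * (Cstar (nconv F 2) - 1 + ε₀) ^ (m + 1))) :
    Summable (fun m : ℕ =>
      ((m : ℝ) + 1) * (p (2 * m + 1) + p (2 * m + 2)) * (Cstar (nconv F 2) - 1) ^ m) ∧
    atTop.limsup (fun x =>
        tail (Measure.sum (fun k => ENNReal.ofReal (p k) • nconv F k)) x /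
          tail (nconv F 2) x) ≤
      ∑' m : ℕ,
        ((m : ℝ) + 1) * (p (2 * m + 1) + p (2 * m + 2)) * (Cstar (nconv F 2) - 1) ^ m := by
  obtain ⟨hposG, M, hM⟩ := hOS
  have hpS : Summable p := by
    by_contra h
    rw [tsum_eq_zero_of_not_summable h] at hpsum
    norm_num at hpsum
  set G := nconv F 2 with hGdef
  set C := Cstar G with hCdef
  have hGsupp : G (Set.Iio 0) = 0 := nconv_supp F hsupp 2
  have hC1 : (1:ℝ) ≤ C := one_le_Cstar G hGsupp hposG M hM
  have hq0 : ∀ m : ℕ, 0 ≤ p (2 * m + 1) + p (2 * m + 2) := fun m => add_nonneg (hp0 _) (hp0 _)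
  have hA : Summable (fun m : ℕ =>
      ((m : ℝ) + 1) * (p (2 * m + 1) + p (2 * m + 2)) * (C - 1) ^ m) :=
    summable_part hC1 hε₀ _ hq0 hsum
  refine ⟨hA, ?_⟩
  set T := ∑' m : ℕ, ((m : ℝ) + 1) * (p (2 * m + 1) + p (2 * m + 2)) * (C - 1) ^ m with hT
  set w : ℕ → ℝ := fun m => (p (2 * m + 1) + p (2 * m + 2)) * (C - 1 + ε₀) ^ (m + 1) with hw
  have hsumW : Summable w := hsum
  set W : ℕ → ℝ := fun N => ∑' k, w (k + N) with hWdef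
  set ε' := min ε₀ (1/2 : ℝ) with hε'
  have hε'0 : 0 < ε' := lt_min hε₀ (by norm_num)
  have hε'1 : ε' < 1 := lt_of_le_of_lt (min_le_right _ _) (by norm_num)
  have hε'le : ε' ≤ ε₀ := min_le_left _ _
  obtain ⟨K, hK0, hKb⟩ := hi ε' ⟨hε'0, hε'1⟩
  have hCε'0 : (0:ℝ) ≤ C - 1 + ε' := by linarith
  have hcob : IsCoboundedUnder (· ≤ ·) atTop
      (fun x => tail (Measure.sum fun k => ENNReal.ofReal (p k) • nconv F k) x / tail G x) :=
    isCoboundedUnder_le_of_le atTop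
      (fun x => div_nonneg ENNReal.toReal_nonneg ENNReal.toReal_nonneg)
  have key : ∀ N : ℕ, ∀ δ : ℝ, 0 < δ →
      atTop.limsup (fun x =>
        tail (Measure.sum fun k => ENNReal.ofReal (p k) • nconv F k) x / tail G x)
        ≤ T + K * W N + δ := by
    intro N δ hδ
    have hev : ∀ m : ℕ, ∀ᶠ x in atTop,
        tail (nconv F (2 * (m + 1))) x / tail G x < ((m : ℝ) + 1) * (C - 1) ^ m + δ := by
      intro m
      have hlim : atTop.limsup (fun x => tail (nconv F (2 * (m + 1))) x / tail G x) ≤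
          ((m : ℝ) + 1) * (C - 1) ^ m := by
        have h := hii (m + 1) (by omega)
        have e1 : (m + 1 : ℕ) - 1 = m := by omega
        rw [e1] at h
        push_cast at h
        exact h
      have hbdd : IsBoundedUnder (· ≤ ·) atTop
          (fun x => tail (nconv F (2 * (m + 1))) x / tail G x) := by
        refine ⟨K * (C - 1 + ε') ^ (m + 1), eventually_map.mpr ?_⟩
        filter_upwards [eventually_ge_atTop (0:ℝ)] with x hx
        rw [div_le_iff₀ (hposG x)]
        exact hKb (m + 1) (by omega) x hx
      exact eventually_lt_of_limsup_lt (lt_of_le_of_lt hlim (by linarith)) hbdd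
    have hall : ∀ᶠ x in atTop, ∀ m ∈ Finset.range N,
        tail (nconv F (2 * (m + 1))) x / tail G x < ((m : ℝ) + 1) * (C - 1) ^ m + δ :=
      (eventually_all_finset _).mpr fun m _ => hev m
    refine limsup_le_of_le hcob ?_
    filter_upwards [hall, eventually_ge_atTop (0:ℝ)] with x hxall hx0
    set s : ℕ → ℝ := fun m => (p (2 * m + 1) + p (2 * m + 2)) * tail (nconv F (2 * (m + 1))) x
      with hs
    have hEN : tail (Measure.sum fun k => ENNReal.ofReal (p k) • nconv F k) x ≤ ∑' m, s m :=
      tail_sum_bound F hsupp p hp0 hpS hpsum hx0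
    have hs_le : ∀ m, s m ≤ (K * tail G x) * w m := by
      intro m
      have h1 : tail (nconv F (2 * (m + 1))) x ≤ K * (C - 1 + ε') ^ (m + 1) * tail G x :=
        hKb (m + 1) (by omega) x hx0
      have h2 : (C - 1 + ε') ^ (m + 1) ≤ (C - 1 + ε₀) ^ (m + 1) :=
        pow_le_pow_left₀ hCε'0 (by linarith) _
      have h3 : tail (nconv F (2 * (m + 1))) x ≤ K * (C - 1 + ε₀) ^ (m + 1) * tail G x := by
        refine h1.trans ?_
        exact mul_le_mul_of_nonneg_right
          (mul_le_mul_of_nonneg_left h2 hK0.le) (hposG x).le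
      calc s m ≤ (p (2 * m + 1) + p (2 * m + 2)) * (K * (C - 1 + ε₀) ^ (m + 1) * tail G x) :=
          mul_le_mul_of_nonneg_left h3 (hq0 m)
        _ = (K * tail G x) * w m := by simp only [hw]; ring
    have hs0 : ∀ m, 0 ≤ s m := fun m => mul_nonneg (hq0 m) ENNReal.toReal_nonneg
    have hsS : Summable s := Summable.of_nonneg_of_le hs0 hs_le (hsumW.mul_left _)
    have hsplit : (∑' m, s m) = ∑ m ∈ Finset.range N, s m + ∑' i, s (i + N) :=
      (Summable.sum_add_tsum_nat_add N hsS).symm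
    have htail : (∑' i, s (i + N)) ≤ (K * tail G x) * W N := by
      have hWsum : Summable (fun i => w (i + N)) := (summable_nat_add_iff N).mpr hsumW
      have h := Summable.tsum_le_tsum (fun i => hs_le (i + N)) ((summable_nat_add_iff N).mpr hsS)
        (hWsum.mul_left (K * tail G x))
      rw [tsum_mul_left] at h
      exact h
    have hhead : ∑ m ∈ Finset.range N, s m ≤
        (∑ m ∈ Finset.range N,
          (p (2 * m + 1) + p (2 * m + 2)) * (((m : ℝ) + 1) * (C - 1) ^ m + δ)) * tail G x := by
      rw [Finset.sum_mul]
      refine Finset.sum_le_sum fun m hm => ?_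
      have hr := (hxall m hm).le
      rw [div_le_iff₀ (hposG x)] at hr
      calc s m ≤ (p (2 * m + 1) + p (2 * m + 2)) * ((((m : ℝ) + 1) * (C - 1) ^ m + δ) * tail G x) :=
          mul_le_mul_of_nonneg_left hr (hq0 m)
        _ = (p (2 * m + 1) + p (2 * m + 2)) * (((m : ℝ) + 1) * (C - 1) ^ m + δ) * tail G x := by
          ring
    have hA' : (∑ m ∈ Finset.range N,
        (p (2 * m + 1) + p (2 * m + 2)) * (((m : ℝ) + 1) * (C - 1) ^ m + δ)) ≤ T + δ := by
      have e : ∀ m : ℕ, (p (2 * m + 1) + p (2 * m + 2)) * (((m : ℝ) + 1) * (C - 1) ^ m + δ) =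
          ((m : ℝ) + 1) * (p (2 * m + 1) + p (2 * m + 2)) * (C - 1) ^ m +
            δ * (p (2 * m + 1) + p (2 * m + 2)) := fun m => by ring
      rw [Finset.sum_congr rfl (fun m _ => e m), Finset.sum_add_distrib, ← Finset.mul_sum]
      have t1 : ∑ m ∈ Finset.range N,
          ((m : ℝ) + 1) * (p (2 * m + 1) + p (2 * m + 2)) * (C - 1) ^ m ≤ T :=
        Summable.sum_le_tsum _ (fun m _ => mul_nonneg (mul_nonneg (by positivity) (hq0 m))
          (pow_nonneg (by linarith) m)) hA
      have t2 : δ * (∑ m ∈ Finset.range N, (p (2 * m + 1) + p (2 * m + 2))) ≤ δ * 1 :=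
        mul_le_mul_of_nonneg_left (qsum_le_one p hp0 hpS hpsum N) hδ.le
      linarith
    rw [div_le_iff₀ (hposG x)]
    calc tail (Measure.sum fun k => ENNReal.ofReal (p k) • nconv F k) x
        ≤ ∑' m, s m := hEN
      _ = ∑ m ∈ Finset.range N, s m + ∑' i, s (i + N) := hsplit
      _ ≤ (∑ m ∈ Finset.range N,
            (p (2 * m + 1) + p (2 * m + 2)) * (((m : ℝ) + 1) * (C - 1) ^ m + δ)) * tail G x
            + (K * tail G x) * W N := add_le_add hhead htail
      _ ≤ (T + δ) * tail G x + (K * tail G x) * W N :=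
          add_le_add_left (mul_le_mul_of_nonneg_right hA' (hposG x).le) _
      _ = (T + K * W N + δ) * tail G x := by ring
  have key2 : ∀ N : ℕ,
      atTop.limsup (fun x =>
        tail (Measure.sum fun k => ENNReal.ofReal (p k) • nconv F k) x / tail G x)
        ≤ T + K * W N :=
    fun N => le_of_forall_pos_le_add (fun δ hδ => key N δ hδ)
  have hW0 : Tendsto W atTop (nhds 0) := tendsto_sum_nat_add w
  have hten : Tendsto (fun N => T + K * W N) atTop (nhds T) := by
    have h := (tendsto_const_nhds (x := T) (f := atTop (α := ℕ))).add
      ((tendsto_const_nhds (x := K) (f := atTop (α := ℕ))).mul hW0)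
    simpa using h
  exact ge_of_tendsto' hten key2
end

section
/- Let t ∈ (1,2), α ∈ ((t-1)/t, 1/t), r = 1 + 1/α, a > 1 with a^r > 2^{t+2}a, aₙ = a^{rⁿ}; let η satisfy P(η = aₙ) = C aₙ^{-α} with C the normalising constant, U uniform on (0,1) independent of η, and let F be the distribution of ξ = η^{1/t}(1+U)^{1/t}. Then F ∉ OL, i.e., limsup_{x→∞} \bar{F}(x-c)/\bar{F}(x) = ∞ for some c > 0. -/
open MeasureTheory Filter Set Asymptotics

set_option maxHeartbeats 1000000 in
/-- For the family F₂(0): ξ = η^{1/t} (1 + U)^{1/t} with t ∈ (1,2) and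
α ∈ ((t-1)/t, 1/t), the distribution F is not in OL: for some c > 0 the ratio
tail F (x - c) / tail F x is unbounded along x → ∞. -/
theorem stmt18 (α t r a : ℝ) (ht : t ∈ Set.Ioo (1:ℝ) 2)
    (hα : α ∈ Set.Ioo ((t - 1) / t) (1 / t))
    (hr : r = 1 + 1/α) (ha : 1 < a) (ha2 : 2 ^ (t + 2) * a < a ^ r)
    (aseq : ℕ → ℝ) (haseq : ∀ n, aseq n = a ^ (r ^ n))
    (C : ℝ) (hC : C = (∑' n : ℕ, aseq n ^ (-α))⁻¹)
    (ηlaw : Measure ℝ)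
    (hη : ηlaw = Measure.sum
      (fun n => ENNReal.ofReal (C * aseq n ^ (-α)) • Measure.dirac (aseq n)))
    (Ulaw : Measure ℝ) (hU : Ulaw = MeasureTheory.volume.restrict (Set.Ioo (0:ℝ) 1))
    (F : Measure ℝ)
    (hF : F = Measure.map (fun q : ℝ × ℝ => q.1 ^ (1/t) * (1 + q.2) ^ (1/t))
      (ηlaw.prod Ulaw)) :
    ∃ c > 0, ∀ M : ℝ, ∃ᶠ x in atTop, M * tail F x < tail F (x - c) := by
  obtain ⟨ht1, ht2⟩ := ht
  obtain ⟨hα1, hα2⟩ := hα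
  have ht0 : (0:ℝ) < t := by linarith
  have hα0 : 0 < α := (div_pos (by linarith) ht0).trans hα1
  have htinv : 1/t < 1 := (div_lt_one ht0).2 ht1
  have hαlt : α < 1 := hα2.trans htinv
  have hrα : r * α = α + 1 := by rw [hr]; field_simp
  have hr1 : 1 < r := by
    rw [hr]; have : 0 < 1/α := by positivity
    linarith
  set Q : ℝ := 2 ^ (t + 2) with hQdef
  have hQ1 : 1 < Q := by
    rw [hQdef]
    exact (Real.one_lt_rpow_iff_of_pos (by norm_num)).2 (Or.inl ⟨one_lt_two, by linarith⟩)
  have hQ0 : 0 < Q := by linarith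
  have ha0 : 0 < a := by linarith
  have hapos : ∀ n, 0 < aseq n := fun n => haseq n ▸ Real.rpow_pos_of_pos ha0 _
  have ha1' : ∀ n, a ≤ aseq n := by
    intro n
    rw [haseq]
    nth_rewrite 1 [← Real.rpow_one a]
    exact (Real.rpow_le_rpow_left_iff ha).2 (one_le_pow₀ hr1.le)
  have hA1 : ∀ n, 1 < aseq n := fun n => ha.trans_le (ha1' n)
  have haQ : Q < a ^ (r - 1) := by
    have h : a ^ r = a ^ (r-1) * a := by
      have h0 := Real.rpow_add ha0 (r-1) 1
      rw [Real.rpow_one, sub_add_cancel] at h0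
      exact h0
    rw [h] at ha2
    exact lt_of_mul_lt_mul_right ha2 ha0.le
  have hstep : ∀ n, aseq (n+1) = aseq n ^ r := by
    intro n
    rw [haseq, haseq, pow_succ, Real.rpow_mul ha0.le]
  have hgrow : ∀ n, Q * aseq n ≤ aseq (n+1) := by
    intro n
    rw [hstep]
    have h2 : aseq n ^ r = aseq n ^ (r-1) * aseq n := by
      have h0 := Real.rpow_add (hapos n) (r-1) 1
      rw [Real.rpow_one, sub_add_cancel] at h0
      exact h0
    rw [h2]
    have hle : Q ≤ aseq n ^ (r-1) :=
      haQ.le.trans (Real.rpow_le_rpow ha0.le (ha1' n) (by linarith))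
    exact mul_le_mul_of_nonneg_right hle (hapos n).le
  have hmono : Monotone aseq :=
    monotone_nat_of_le_succ fun n =>
      le_trans (le_mul_of_one_le_left (hapos n).le hQ1.le) (hgrow n)
  have hgeom : ∀ k i, aseq k * Q ^ i ≤ aseq (k + i) := by
    intro k i
    induction i with
    | zero => simp
    | succ i ih =>
      have he : aseq k * Q ^ (i+1) = (aseq k * Q ^ i) * Q := by ring
      rw [he, show k + (i+1) = (k+i)+1 from rfl]
      calc (aseq k * Q^i) * Q ≤ aseq (k+i) * Q :=
            mul_le_mul_of_nonneg_right ih hQ0.le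
        _ = Q * aseq (k+i) := mul_comm _ _
        _ ≤ aseq (k+i+1) := hgrow _
  set q : ℝ := Q ^ (-α) with hqdef
  have hq0 : 0 < q := Real.rpow_pos_of_pos hQ0 _
  have hq1 : q < 1 := Real.rpow_lt_one_of_one_lt_of_neg hQ1 (by linarith)
  have hQpow : ∀ i : ℕ, ((Q:ℝ) ^ i) ^ (-α) = q ^ i := by
    intro i
    rw [← Real.rpow_natCast Q i, ← Real.rpow_mul hQ0.le, mul_comm,
      Real.rpow_mul hQ0.le, Real.rpow_natCast]
  have hbgeom : ∀ k i, aseq (k + i) ^ (-α) ≤ aseq k ^ (-α) * q ^ i := by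
    intro k i
    have h := hgeom k i
    have h2 := Real.rpow_le_rpow_of_nonpos (mul_pos (hapos k) (pow_pos hQ0 i)) h
      (neg_nonpos.2 hα0.le)
    rwa [Real.mul_rpow (hapos k).le (pow_pos hQ0 i).le, hQpow] at h2
  have hsum : Summable (fun n => aseq n ^ (-α)) := by
    refine Summable.of_nonneg_of_le (fun n => (Real.rpow_pos_of_pos (hapos n) _).le)
      (fun n => ?_)
      ((summable_geometric_of_lt_one hq0.le hq1).mul_left (aseq 0 ^ (-α)))
    simpa using hbgeom 0 n
  have hCpos : 0 < C := by
    rw [hC]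
    exact inv_pos.2 (Summable.tsum_pos hsum (fun i => (Real.rpow_pos_of_pos (hapos i) _).le) 0
      (Real.rpow_pos_of_pos (hapos 0) _))
  -- measure-theoretic part
  have hg : Measurable (fun p : ℝ × ℝ => p.1 ^ (1/t) * (1 + p.2) ^ (1/t)) := by fun_prop
  have hIoi : ∀ x : ℝ, MeasurableSet
      ((fun p : ℝ × ℝ => p.1 ^ (1/t) * (1 + p.2) ^ (1/t)) ⁻¹' Set.Ioi x) :=
    fun x => hg measurableSet_Ioi
  have hkey : ∀ x : ℝ, F (Set.Ioi x) = ∑' m, ENNReal.ofReal (C * aseq m ^ (-α)) *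
      (volume.restrict (Set.Ioo (0:ℝ) 1))
        (Prod.mk (aseq m) ⁻¹' ((fun p : ℝ × ℝ => p.1 ^ (1/t) * (1 + p.2) ^ (1/t)) ⁻¹' Set.Ioi x)) := by
    intro x
    rw [hF, hη, hU, Measure.map_apply hg measurableSet_Ioi, Measure.prod_sum_left,
      Measure.sum_apply _ (hIoi x)]
    refine tsum_congr fun m => ?_
    rw [Measure.prod_apply (hIoi x), lintegral_smul_measure,
      lintegral_dirac' _ (measurable_measure_prodMk_left (hIoi x)), smul_eq_mul]
  have hUle : ∀ s : Set ℝ, (volume.restrict (Set.Ioo (0:ℝ) 1)) s ≤ 1 := by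
    intro s
    calc (volume.restrict (Set.Ioo (0:ℝ) 1)) s
        ≤ (volume.restrict (Set.Ioo (0:ℝ) 1)) Set.univ := measure_mono (Set.subset_univ s)
      _ = volume (Set.Ioo (0:ℝ) 1) := by rw [Measure.restrict_apply_univ]
      _ = 1 := by rw [Real.volume_Ioo]; norm_num
  set xseq : ℕ → ℝ := fun n => (2 * aseq n) ^ (1/t) with hxdef
  -- generic geometric bound on the tail sum starting at k
  have hterm : ∀ (k i : ℕ) (v : ENNReal), v ≤ 1 →
      ENNReal.ofReal (C * aseq (i + k) ^ (-α)) * v ≤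
        ENNReal.ofReal (C * aseq k ^ (-α)) * ENNReal.ofReal (q ^ i) := by
    intro k i v hv
    calc ENNReal.ofReal (C * aseq (i + k) ^ (-α)) * v
        ≤ ENNReal.ofReal (C * aseq (i + k) ^ (-α)) * 1 := mul_le_mul' le_rfl hv
      _ = ENNReal.ofReal (C * aseq (i + k) ^ (-α)) := mul_one _
      _ ≤ ENNReal.ofReal (C * aseq k ^ (-α)) * ENNReal.ofReal (q ^ i) := by
          rw [← ENNReal.ofReal_mul (by
            exact mul_nonneg hCpos.le (Real.rpow_pos_of_pos (hapos k) _).le)]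
          refine ENNReal.ofReal_le_ofReal ?_
          have h := hbgeom k i
          rw [add_comm i k]
          calc C * aseq (k + i) ^ (-α) ≤ C * (aseq k ^ (-α) * q ^ i) :=
                mul_le_mul_of_nonneg_left h hCpos.le
            _ = C * aseq k ^ (-α) * q ^ i := by ring
  have hgeosum : ∑' i : ℕ, ENNReal.ofReal (q ^ i) = ENNReal.ofReal ((1 - q)⁻¹) := by
    rw [← ENNReal.ofReal_tsum_of_nonneg (fun i => (pow_pos hq0 i).le)
      (summable_geometric_of_lt_one hq0.le hq1), tsum_geometric_of_lt_one hq0.le hq1]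
  have hub : ∀ n, F (Set.Ioi (xseq n)) ≤
      ENNReal.ofReal (C * aseq (n+1) ^ (-α) * (1 - q)⁻¹) := by
    intro n
    rw [hkey]
    have hzero : ∀ m ≤ n, (volume.restrict (Set.Ioo (0:ℝ) 1))
        (Prod.mk (aseq m) ⁻¹'
          ((fun p : ℝ × ℝ => p.1 ^ (1/t) * (1 + p.2) ^ (1/t)) ⁻¹' Set.Ioi (xseq n))) = 0 := by
      intro m hm
      rw [Measure.restrict_apply' measurableSet_Ioo]
      convert measure_empty
      · rw [Set.eq_empty_iff_forall_notMem]
        rintro u ⟨hu1, hu2, hu3⟩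
        simp only [Set.mem_preimage, Set.mem_Ioi] at hu1
        have hlt : aseq m ^ (1/t) * (1 + u) ^ (1/t) < xseq n := by
          rw [← Real.mul_rpow (hapos m).le (by linarith), hxdef]
          refine Real.rpow_lt_rpow (mul_nonneg (hapos m).le (by linarith)) ?_ (by positivity)
          have h1 : aseq m ≤ aseq n := hmono hm
          nlinarith [hapos m]
        linarith
      · infer_instance
    set f : ℕ → ENNReal := fun m => ENNReal.ofReal (C * aseq m ^ (-α)) *
      (volume.restrict (Set.Ioo (0:ℝ) 1))
        (Prod.mk (aseq m) ⁻¹'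
          ((fun p : ℝ × ℝ => p.1 ^ (1/t) * (1 + p.2) ^ (1/t)) ⁻¹' Set.Ioi (xseq n))) with hfdef
    have hsplit := Summable.sum_add_tsum_nat_add' (f := f) (k := n+1) ENNReal.summable
    rw [← hsplit, Finset.sum_eq_zero (fun m hm => by
      rw [hfdef]; simp only []
      rw [hzero m (Nat.lt_succ_iff.1 (Finset.mem_range.1 hm)), mul_zero]), zero_add]
    calc ∑' i, f (i + (n+1))
        ≤ ∑' i, ENNReal.ofReal (C * aseq (n+1) ^ (-α)) * ENNReal.ofReal (q ^ i) :=
          ENNReal.tsum_le_tsum fun i => hterm (n+1) i _ (hUle _)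
      _ = ENNReal.ofReal (C * aseq (n+1) ^ (-α)) * ENNReal.ofReal ((1 - q)⁻¹) := by
          rw [ENNReal.tsum_mul_left, hgeosum]
      _ = ENNReal.ofReal (C * aseq (n+1) ^ (-α) * (1 - q)⁻¹) := by
          rw [← ENNReal.ofReal_mul (mul_nonneg hCpos.le
            (Real.rpow_pos_of_pos (hapos (n+1)) _).le)]
  have hfin : ∀ y : ℝ, F (Set.Ioi y) ≠ ⊤ := by
    intro y
    rw [hkey]
    refine ne_top_of_le_ne_top ?_ (ENNReal.tsum_le_tsum fun m => by
      simpa using hterm 0 m _ (hUle _))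
    rw [ENNReal.tsum_mul_left, hgeosum, ← ENNReal.ofReal_mul (mul_nonneg hCpos.le
      (Real.rpow_pos_of_pos (hapos 0) _).le)]
    exact ENNReal.ofReal_ne_top
  -- lower bound
  have hlb : ∀ n, 1 ≤ aseq n ^ (1/t) * ((2:ℝ) ^ (1/t) - 1) →
      ENNReal.ofReal (C * aseq n ^ (-α) * aseq n ^ (-(1/t))) ≤
        F (Set.Ioi (xseq n - 1)) := by
    intro n hcond
    rw [hkey]
    refine le_trans ?_ (ENNReal.le_tsum n)
    rw [ENNReal.ofReal_mul (mul_nonneg hCpos.le (Real.rpow_pos_of_pos (hapos n) _).le)]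
    refine mul_le_mul' le_rfl ?_
    -- notation
    have hA0 : 0 < aseq n := hapos n
    have hAt : 0 < aseq n ^ (1/t) := Real.rpow_pos_of_pos hA0 _
    have hXeq : xseq n = (2:ℝ) ^ (1/t) * aseq n ^ (1/t) := by
      rw [hxdef]; exact Real.mul_rpow (by norm_num) hA0.le
    have hXA : aseq n ^ (1/t) ≤ xseq n - 1 := by
      rw [hXeq]; nlinarith [hcond]
    have hX1 : 1 < xseq n := by linarith
    have hXt : xseq n ^ t = 2 * aseq n := by
      rw [hxdef]
      rw [← Real.rpow_mul (by linarith : (0:ℝ) ≤ 2 * aseq n), one_div_mul_cancel ht0.ne',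
        Real.rpow_one]
    have hAid : (aseq n ^ (1/t)) ^ t = aseq n := by
      rw [← Real.rpow_mul hA0.le, one_div_mul_cancel ht0.ne', Real.rpow_one]
    have hY0 : 0 < xseq n - 1 := by linarith
    have hYt_ge : aseq n ≤ (xseq n - 1) ^ t := by
      rw [← hAid]; exact Real.rpow_le_rpow hAt.le hXA ht0.le
    have hYt_lt : (xseq n - 1) ^ t < 2 * aseq n := by
      rw [← hXt]; exact Real.rpow_lt_rpow (by linarith) (by linarith) ht0
    set s : ℝ := (xseq n - 1) ^ t / (aseq n) - 1 with hsdef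
    have hs0 : (0:ℝ) ≤ s := by
      rw [hsdef, le_sub_iff_add_le, zero_add, le_div_iff₀ hA0, one_mul]
      exact hYt_ge
    have hs1 : s < 1 := by
      rw [hsdef, sub_lt_iff_lt_add]
      rw [div_lt_iff₀ hA0]
      linarith
    have hsub : Set.Ioo s 1 ⊆
        (Prod.mk (aseq n) ⁻¹'
          ((fun p : ℝ × ℝ => p.1 ^ (1/t) * (1 + p.2) ^ (1/t)) ⁻¹' Set.Ioi (xseq n - 1)))
          ∩ Set.Ioo (0:ℝ) 1 := by
      rintro u ⟨hu1, hu2⟩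
      refine ⟨?_, lt_of_le_of_lt hs0 hu1, hu2⟩
      simp only [Set.mem_preimage, Set.mem_Ioi]
      rw [← Real.mul_rpow hA0.le (by linarith)]
      have h1 : (xseq n - 1) ^ t < aseq n * (1 + u) := by
        have h2 : (xseq n - 1) ^ t / aseq n < 1 + u := by
          rw [hsdef] at hu1; linarith
        rw [div_lt_iff₀ hA0] at h2
        linarith [mul_comm (aseq n) (1 + u)]
      calc xseq n - 1 = ((xseq n - 1) ^ t) ^ (1/t) := by
            rw [← Real.rpow_mul hY0.le, mul_one_div_cancel ht0.ne', Real.rpow_one]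
        _ < (aseq n * (1 + u)) ^ (1/t) :=
            Real.rpow_lt_rpow (Real.rpow_nonneg hY0.le _) h1 (by positivity)
    have hineq : aseq n ^ (-(1/t)) ≤ 1 - s := by
      -- 1 - s = 2 - (xseq n - 1)^t / aseq n
      have e1 : (xseq n - 1) ^ t = (xseq n - 1) * (xseq n - 1) ^ (t - 1) := by
        have h0 := Real.rpow_add hY0 1 (t-1)
        rw [Real.rpow_one, show (1:ℝ) + (t-1) = t by ring] at h0
        exact h0
      have e2 : (xseq n - 1) ^ (t - 1) ≤ xseq n ^ (t - 1) :=
        Real.rpow_le_rpow hY0.le (by linarith) (by linarith)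
      have e3 : xseq n ^ t = xseq n * xseq n ^ (t - 1) := by
        have h0 := Real.rpow_add (by linarith : (0:ℝ) < xseq n) 1 (t-1)
        rw [Real.rpow_one, show (1:ℝ) + (t-1) = t by ring] at h0
        exact h0
      have e4 : xseq n ^ (t-1) ≤ 2 * aseq n - (xseq n - 1) ^ t := by
        have h5 : (xseq n - 1) ^ t ≤ (xseq n - 1) * xseq n ^ (t-1) := by
          rw [e1]
          exact mul_le_mul_of_nonneg_left e2 hY0.le
        have h6 : 2 * aseq n = xseq n * xseq n ^ (t-1) := by rw [← hXt, e3]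
        have h7 : xseq n * xseq n ^ (t-1) - (xseq n - 1) * xseq n ^ (t-1)
            = xseq n ^ (t-1) := by ring
        linarith [h5, h6, h7]
      have e5 : aseq n * aseq n ^ (-(1/t)) ≤ xseq n ^ (t-1) := by
        have h7 : aseq n ^ ((1/t) * (t-1)) ≤ xseq n ^ (t-1) := by
          rw [hxdef]
          simp only []
          rw [← Real.rpow_mul (by linarith : (0:ℝ) ≤ 2 * aseq n)]
          exact Real.rpow_le_rpow hA0.le (by linarith) (by nlinarith)
        have h8 : aseq n ^ ((1/t) * (t-1)) = aseq n * aseq n ^ (-(1/t)) := by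
          rw [show (1/t) * (t-1) = 1 + (-(1/t)) by field_simp; ring,
            Real.rpow_add hA0, Real.rpow_one]
        rw [← h8]; exact h7
      have e6 : aseq n * aseq n ^ (-(1/t)) ≤ 2 * aseq n - (xseq n - 1) ^ t :=
        le_trans e5 e4
      rw [hsdef]
      have e7 : 1 - ((xseq n - 1) ^ t / aseq n - 1) = (2 * aseq n - (xseq n - 1) ^ t) / aseq n := by
        field_simp
        ring
      rw [e7, le_div_iff₀ hA0]
      calc aseq n ^ (-(1/t)) * aseq n = aseq n * aseq n ^ (-(1/t)) := mul_comm _ _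
        _ ≤ 2 * aseq n - (xseq n - 1) ^ t := e6
    calc ENNReal.ofReal (aseq n ^ (-(1/t))) ≤ ENNReal.ofReal (1 - s) :=
          ENNReal.ofReal_le_ofReal hineq
      _ = volume (Set.Ioo s 1) := (Real.volume_Ioo).symm
      _ ≤ (volume.restrict (Set.Ioo (0:ℝ) 1))
          (Prod.mk (aseq n) ⁻¹'
            ((fun p : ℝ × ℝ => p.1 ^ (1/t) * (1 + p.2) ^ (1/t)) ⁻¹' Set.Ioi (xseq n - 1))) := by
          rw [Measure.restrict_apply' measurableSet_Ioo]
          exact measure_mono hsub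
  -- convert to real tail bounds
  have hub' : ∀ n, tail F (xseq n) ≤ C * aseq (n+1) ^ (-α) * (1 - q)⁻¹ := by
    intro n
    refine ENNReal.toReal_le_of_le_ofReal ?_ (hub n)
    have := Real.rpow_pos_of_pos (hapos (n+1)) (-α)
    have h1q : 0 < 1 - q := by linarith
    positivity
  have hlb' : ∀ n, 1 ≤ aseq n ^ (1/t) * ((2:ℝ) ^ (1/t) - 1) →
      C * aseq n ^ (-α) * aseq n ^ (-(1/t)) ≤ tail F (xseq n - 1) := by
    intro n hcond
    have h := hlb n hcond
    have hnn : 0 ≤ C * aseq n ^ (-α) * aseq n ^ (-(1/t)) := by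
      have := Real.rpow_pos_of_pos (hapos n) (-α)
      have := Real.rpow_pos_of_pos (hapos n) (-(1/t))
      positivity
    calc C * aseq n ^ (-α) * aseq n ^ (-(1/t))
        = (ENNReal.ofReal (C * aseq n ^ (-α) * aseq n ^ (-(1/t)))).toReal := by
          rw [ENNReal.toReal_ofReal hnn]
      _ ≤ tail F (xseq n - 1) := ENNReal.toReal_mono (hfin _) h
  -- tendsto facts
  have h2Q : (2:ℝ) ≤ Q := by
    have h0 : (2:ℝ) ^ (1:ℝ) ≤ 2 ^ (t + 2) := by
      exact (Real.rpow_le_rpow_left_iff one_lt_two).2 (by linarith)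
    rwa [Real.rpow_one] at h0
  have ha0seq : aseq 0 = a := by rw [haseq]; norm_num
  have hge : ∀ n : ℕ, (n:ℝ) ≤ aseq n := by
    intro n
    calc (n:ℝ) ≤ 2 ^ n := by exact_mod_cast (Nat.lt_two_pow_self (n := n)).le
      _ ≤ Q ^ n := pow_le_pow_left₀ (by norm_num) h2Q n
      _ ≤ a * Q ^ n := le_mul_of_one_le_left (pow_pos (by linarith) n).le ha.le
      _ ≤ aseq n := by
          have h := hgeom 0 n
          rwa [ha0seq, Nat.zero_add] at h
  have htend : Tendsto aseq atTop atTop := tendsto_atTop_mono hge tendsto_natCast_atTop_atTop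
  have hT1 : Tendsto (fun n => aseq n ^ (1/t)) atTop atTop :=
    (tendsto_rpow_atTop (by positivity)).comp htend
  have hT2 : Tendsto (fun n => aseq n ^ (1 - 1/t)) atTop atTop :=
    (tendsto_rpow_atTop (by linarith)).comp htend
  have h2t1 : (1:ℝ) < 2 ^ (1/t) :=
    (Real.one_lt_rpow_iff_of_pos (by norm_num)).2 (Or.inl ⟨one_lt_two, by positivity⟩)
  -- final assembly
  refine ⟨1, one_pos, fun M => ?_⟩
  rw [Filter.frequently_atTop]
  intro X
  have e1 : ∀ᶠ n in atTop, max X 1 ≤ aseq n ^ (1/t) := hT1.eventually_ge_atTop _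
  have e2 : ∀ᶠ n in atTop, ((2:ℝ) ^ (1/t) - 1)⁻¹ ≤ aseq n ^ (1/t) := hT1.eventually_ge_atTop _
  have e3 : ∀ᶠ n in atTop, max M 0 * (1 - q)⁻¹ < aseq n ^ (1 - 1/t) := hT2.eventually_gt_atTop _
  obtain ⟨n, ⟨h1, h2⟩, h3⟩ := ((e1.and e2).and e3).exists
  have hxge : aseq n ^ (1/t) ≤ xseq n := by
    rw [hxdef]
    exact Real.rpow_le_rpow (hapos n).le (by linarith [hapos n]) (by positivity)
  refine ⟨xseq n, le_trans (le_trans (le_max_left X 1) h1) hxge, ?_⟩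
  have hdpos : (0:ℝ) < 2 ^ (1/t) - 1 := by linarith
  have hcond : 1 ≤ aseq n ^ (1/t) * ((2:ℝ) ^ (1/t) - 1) := by
    calc (1:ℝ) = ((2:ℝ) ^ (1/t) - 1)⁻¹ * ((2:ℝ) ^ (1/t) - 1) := by
          rw [inv_mul_cancel₀ hdpos.ne']
      _ ≤ aseq n ^ (1/t) * ((2:ℝ) ^ (1/t) - 1) :=
          mul_le_mul_of_nonneg_right h2 hdpos.le
  have hM0 : (0:ℝ) ≤ max M 0 := le_max_right _ _
  have hbn : 0 < C * aseq n ^ (-α) := mul_pos hCpos (Real.rpow_pos_of_pos (hapos n) _)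
  have hsplit2 : aseq (n+1) ^ (-α) = aseq n ^ (-α) * (aseq n)⁻¹ := by
    rw [hstep n, ← Real.rpow_mul (hapos n).le,
      show r * (-α) = -α + (-1) by rw [mul_neg, hrα]; ring,
      Real.rpow_add (hapos n), Real.rpow_neg_one]
  have hAexp : aseq n ^ (1 - 1/t) * (aseq n)⁻¹ = aseq n ^ (-(1/t)) := by
    rw [show (1:ℝ) - 1/t = (-(1/t)) + 1 by ring, Real.rpow_add (hapos n), Real.rpow_one,
      mul_assoc, mul_inv_cancel₀ (hapos n).ne', mul_one]
  have hstrict : max M 0 * (C * aseq (n+1) ^ (-α) * (1 - q)⁻¹) <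
      C * aseq n ^ (-α) * aseq n ^ (-(1/t)) := by
    calc max M 0 * (C * aseq (n+1) ^ (-α) * (1 - q)⁻¹)
        = (max M 0 * (1 - q)⁻¹) * (C * aseq n ^ (-α)) * (aseq n)⁻¹ := by
          rw [hsplit2]; ring
      _ < aseq n ^ (1 - 1/t) * (C * aseq n ^ (-α)) * (aseq n)⁻¹ := by
          exact mul_lt_mul_of_pos_right (mul_lt_mul_of_pos_right h3 hbn)
            (inv_pos.2 (hapos n))
      _ = C * aseq n ^ (-α) * (aseq n ^ (1 - 1/t) * (aseq n)⁻¹) := by ring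
      _ = C * aseq n ^ (-α) * aseq n ^ (-(1/t)) := by rw [hAexp]
  calc M * tail F (xseq n) ≤ max M 0 * tail F (xseq n) :=
        mul_le_mul_of_nonneg_right (le_max_left M 0) ENNReal.toReal_nonneg
    _ ≤ max M 0 * (C * aseq (n+1) ^ (-α) * (1 - q)⁻¹) :=
        mul_le_mul_of_nonneg_left (hub' n) hM0
    _ < C * aseq n ^ (-α) * aseq n ^ (-(1/t)) := hstrict
    _ ≤ tail F (xseq n - 1) := hlb' n hcond
end
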